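/- arXiv:1412.1540 — 4 statements merged into one kernel-verified Lean document; each statement's English description precedes it below -/
import Mathlib

section
/- Let B : ℝ → Mₙ(ℝ) be a continuous matrix-valued function and g : ℝ → ℝⁿ a continuous function satisfying g(t) = g_m t^m + o(t^m) as t → 0, where g_m ∈ ℝⁿ and m is a nonnegative integer. If y : ℝ → ℝⁿ is the solution of ẏ = B(t)y + g(t) with y(0) = 0, then y(t) = (g_m/(m+1)) t^{m+1} + o(t^{m+1}) as t → 0. -/
open Filter Topology

lemma mvt0 {E : Type*} [NormedAddCommGroup E] [NormedSpace ℝ E]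
    {f f' : ℝ → E} (h : ∀ s, HasDerivAt f (f' s) s) {t C : ℝ}
    (hC : ∀ s ∈ Set.uIcc 0 t, ‖f' s‖ ≤ C) : ‖f t - f 0‖ ≤ C * |t| := by
  have := Convex.norm_image_sub_le_of_norm_hasDerivWithin_le
    (f := f) (f' := f') (s := Set.uIcc 0 t)
    (fun x _ => (h x).hasDerivWithinAt) hC (convex_uIcc 0 t)
    (Set.left_mem_uIcc) (Set.right_mem_uIcc)
  simpa using this

lemma abs_le_of_mem_uIcc {s t : ℝ} (hs : s ∈ Set.uIcc 0 t) : |s| ≤ |t| := by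
  rw [Set.mem_uIcc] at hs
  rcases hs with ⟨h1, h2⟩ | ⟨h1, h2⟩ <;>
    exact abs_le.2 ⟨by linarith [neg_abs_le t, le_abs_self t],
      by linarith [neg_abs_le t, le_abs_self t]⟩

/-- If `g(t) = g_m tᵐ + o(tᵐ)` as `t → 0` and `y` solves
`ẏ = B(t)y + g(t)`, `y(0) = 0`, then `y(t) = (g_m/(m+1)) t^{m+1} + o(t^{m+1})`
as `t → 0`. -/
theorem stmt4 (n : ℕ) (hn : 1 ≤ n)
    (B : ℝ → Matrix (Fin n) (Fin n) ℝ) (hB : ∀ i j, Continuous fun t => B t i j)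
    (g : ℝ → Fin n → ℝ) (hg : Continuous g)
    (m : ℕ) (gm : Fin n → ℝ)
    (hgasym : Tendsto (fun t : ℝ => (t ^ m)⁻¹ • (g t - t ^ m • gm))
      (𝓝[≠] (0 : ℝ)) (𝓝 0))
    (y : ℝ → Fin n → ℝ)
    (hy : ∀ (t : ℝ) (i : Fin n),
      HasDerivAt (fun s => y s i) ((B t).mulVec (y t) i + g t i) t)
    (hy0 : y 0 = 0) :
    Tendsto (fun t : ℝ =>
        (t ^ (m + 1))⁻¹ • (y t - (t ^ (m + 1) / (m + 1 : ℝ)) • gm))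
      (𝓝[≠] (0 : ℝ)) (𝓝 0) := by
  classical
  -- vector derivative of y
  have hy' : ∀ t, HasDerivAt y ((B t).mulVec (y t) + g t) t := by
    intro t
    exact hasDerivAt_pi.2 fun i => hy t i
  have hycont : Continuous y :=
    continuous_pi fun i => Differentiable.continuous
      (fun t => (hy t i).differentiableAt : Differentiable ℝ fun s => y s i)
  -- bound on matrix entries near 0
  obtain ⟨K, hK0, hK⟩ : ∃ K : ℝ, 0 ≤ K ∧
      ∀ s ∈ Set.Icc (-1 : ℝ) 1, ∀ v : Fin n → ℝ, ‖(B s).mulVec v‖ ≤ K * ‖v‖ := by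
    set φ : ℝ → ℝ := fun s => ∑ i : Fin n, ∑ j : Fin n, |B s i j| with hφ
    have hφc : Continuous φ :=
      continuous_finset_sum _ fun i _ => continuous_finset_sum _ fun j _ => (hB i j).abs
    obtain ⟨x₀, hx₀, hmax⟩ := (isCompact_Icc (a := (-1:ℝ)) (b := 1)).exists_isMaxOn
      ⟨0, by norm_num⟩ hφc.continuousOn
    refine ⟨n * φ x₀, by positivity, fun s hs v => ?_⟩
    have hφ0 : 0 ≤ φ x₀ := le_trans (by positivity) (hmax hs)
    rw [pi_norm_le_iff_of_nonneg (by positivity)]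
    intro i
    have hentry : ∀ i' j' : Fin n, |B s i' j'| ≤ φ x₀ := by
      intro i' j'
      refine le_trans ?_ (hmax hs)
      calc |B s i' j'| ≤ ∑ j, |B s i' j| :=
            Finset.single_le_sum (f := fun j => |B s i' j|)
              (fun j _ => abs_nonneg _) (Finset.mem_univ j')
        _ ≤ φ s := Finset.single_le_sum (f := fun i => ∑ j, |B s i j|)
            (fun i _ => Finset.sum_nonneg fun j _ => abs_nonneg _) (Finset.mem_univ i')
    calc ‖(B s).mulVec v i‖ = |∑ j, B s i j * v j| := by
          simp [Matrix.mulVec, dotProduct]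
      _ ≤ ∑ j, |B s i j * v j| := Finset.abs_sum_le_sum_abs _ _
      _ ≤ ∑ j : Fin n, φ x₀ * ‖v‖ := by
          refine Finset.sum_le_sum fun j _ => ?_
          rw [abs_mul]
          exact mul_le_mul (hentry i j) (norm_le_pi_norm v j) (abs_nonneg _) hφ0
      _ = n * φ x₀ * ‖v‖ := by
          simp [Finset.sum_const, mul_assoc]
  -- g 0 = 0^m • gm
  have hg0 : g 0 = (0:ℝ)^m • gm := by
    have h1 : Tendsto g (𝓝[≠] (0:ℝ)) (𝓝 ((0:ℝ)^m • gm)) := by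
      have h2 : Tendsto (fun s : ℝ => (s^m) • ((s^m)⁻¹ • (g s - s^m • gm)) + s^m • gm)
          (𝓝[≠] (0:ℝ)) (𝓝 ((0:ℝ)^m • gm)) := by
        have ha : Tendsto (fun s : ℝ => s^m) (𝓝[≠] (0:ℝ)) (𝓝 ((0:ℝ)^m)) :=
          ((continuous_pow m).tendsto 0).mono_left nhdsWithin_le_nhds
        have := ha.smul hgasym
        simpa using this.add (ha.smul_const gm)
      refine h2.congr' ?_
      filter_upwards [self_mem_nhdsWithin] with s hs
      have hsm : (s:ℝ)^m ≠ 0 := pow_ne_zero m hs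
      simp [smul_smul, mul_inv_cancel₀ hsm]
    exact tendsto_nhds_unique ((hg.tendsto 0).mono_left nhdsWithin_le_nhds) h1
  -- smallness of g - s^m gm
  have hgsmall : ∀ ε > (0:ℝ), ∃ δ > (0:ℝ), ∀ s : ℝ, |s| < δ →
      ‖g s - s^m • gm‖ ≤ ε * |s|^m := by
    intro ε hε
    rw [Metric.tendsto_nhdsWithin_nhds] at hgasym
    obtain ⟨δ, hδ, hδ'⟩ := hgasym ε hε
    refine ⟨δ, hδ, fun s hs => ?_⟩
    rcases eq_or_ne s 0 with rfl | hs0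
    · simp only [hg0, sub_self, norm_zero]
      positivity
    · have := hδ' (x := s) hs0 (by simpa [Real.dist_eq] using hs)
      rw [dist_zero_right, norm_smul, norm_inv, norm_pow, Real.norm_eq_abs] at this
      have h2 : (|s|^m)⁻¹ * ‖g s - s^m • gm‖ ≤ ε := le_of_lt this
      have h3 : (0:ℝ) < |s|^m := by positivity
      rw [inv_mul_le_iff₀ h3] at h2
      linarith [h2]
  -- bootstrap: y t = O(t^(m+1))
  have key : ∀ k : ℕ, k ≤ m + 1 → ∃ C δ : ℝ, 0 < δ ∧ δ ≤ 1 ∧ 0 ≤ C ∧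
      ∀ t : ℝ, |t| ≤ δ → ‖y t‖ ≤ C * |t|^k := by
    intro k
    induction k with
    | zero =>
      intro _
      obtain ⟨x₀, hx₀, hmax⟩ := (isCompact_Icc (a := (-1:ℝ)) (b := 1)).exists_isMaxOn
        ⟨0, by norm_num⟩ (hycont.norm.continuousOn)
      refine ⟨‖y x₀‖, 1, by norm_num, le_rfl, norm_nonneg _, fun t ht => ?_⟩
      simpa using hmax (Set.mem_Icc.2 (abs_le.1 ht))
    | succ k ih =>
      intro hk
      obtain ⟨C, δ, hδ, hδ1, hC, hbd⟩ := ih (by omega)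
      obtain ⟨δ₁, hδ₁, hg1⟩ := hgsmall 1 one_pos
      set δ' := min δ (δ₁ / 2) with hδ'
      have hδ'pos : 0 < δ' := lt_min hδ (by linarith)
      refine ⟨K * C + (1 + ‖gm‖), δ', hδ'pos, le_trans (min_le_left _ _) hδ1,
        by positivity, fun t ht => ?_⟩
      have hbound : ∀ s ∈ Set.uIcc 0 t,
          ‖(B s).mulVec (y s) + g s‖ ≤ (K * C + (1 + ‖gm‖)) * |t|^k := by
        intro s hs
        have hst : |s| ≤ |t| := abs_le_of_mem_uIcc hs
        have hs1 : |s| ≤ 1 := le_trans hst (le_trans ht (le_trans (min_le_left _ _) hδ1))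
        have hsδ : |s| ≤ δ := le_trans hst (le_trans ht (min_le_left _ _))
        have hsδ₁ : |s| < δ₁ := lt_of_le_of_lt (le_trans hst (le_trans ht (min_le_right _ _)))
          (by linarith)
        have h1 : ‖(B s).mulVec (y s)‖ ≤ K * (C * |s|^k) := by
          refine le_trans (hK s (abs_le.1 hs1) (y s)) ?_
          exact mul_le_mul_of_nonneg_left (hbd s hsδ) hK0
        have h2 : ‖g s‖ ≤ (1 + ‖gm‖) * |s|^m := by
          have := hg1 s hsδ₁
          calc ‖g s‖ ≤ ‖g s - s^m • gm‖ + ‖s^m • gm‖ := by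
                simpa using norm_add_le (g s - s^m • gm) (s^m • gm)
            _ ≤ 1 * |s|^m + |s|^m * ‖gm‖ := by
                rw [norm_smul, Real.norm_eq_abs, abs_pow]; exact add_le_add this le_rfl
            _ = (1 + ‖gm‖) * |s|^m := by ring
        have h3 : |s|^m ≤ |s|^k := pow_le_pow_of_le_one (abs_nonneg s) hs1 (by omega)
        have h4 : |s|^k ≤ |t|^k := pow_le_pow_left₀ (abs_nonneg s) hst k
        calc ‖(B s).mulVec (y s) + g s‖ ≤ ‖(B s).mulVec (y s)‖ + ‖g s‖ := norm_add_le _ _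
          _ ≤ K * (C * |s|^k) + (1 + ‖gm‖) * |s|^k :=
              add_le_add h1 (le_trans h2 (mul_le_mul_of_nonneg_left h3 (by positivity)))
          _ = (K * C + (1 + ‖gm‖)) * |s|^k := by ring
          _ ≤ (K * C + (1 + ‖gm‖)) * |t|^k :=
              mul_le_mul_of_nonneg_left h4 (by positivity)
      have := mvt0 hy' hbound
      rw [hy0, sub_zero] at this
      calc ‖y t‖ ≤ (K * C + (1 + ‖gm‖)) * |t|^k * |t| := this
        _ = (K * C + (1 + ‖gm‖)) * |t|^(k+1) := by ring
  obtain ⟨C, δ, hδ, hδ1, hC, hbd⟩ := key (m + 1) le_rfl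
  -- final estimate
  rw [NormedAddCommGroup.tendsto_nhds_zero]
  intro ε hε
  obtain ⟨δ₂, hδ₂, hg2⟩ := hgsmall (ε / 4) (by linarith)
  have hKC1 : (0:ℝ) < K * C + 1 := by positivity
  set δ₃ := min δ (min (δ₂ / 2) (ε / (4 * (K * C + 1)))) with hδ₃def
  have hδ₃pos : 0 < δ₃ := lt_min hδ (lt_min (by linarith) (by positivity))
  rw [eventually_nhdsWithin_iff, Metric.eventually_nhds_iff]
  refine ⟨δ₃, hδ₃pos, fun t hdt (ht0 : t ≠ 0) => ?_⟩
  rw [Real.dist_eq, sub_zero] at hdt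
  -- derivative of z
  set z : ℝ → Fin n → ℝ := fun s => y s - (s^(m+1) / (m+1:ℝ)) • gm with hz
  have hm1 : ((m:ℝ) + 1) ≠ 0 := by positivity
  have hz' : ∀ s, HasDerivAt z ((B s).mulVec (y s) + (g s - s^m • gm)) s := by
    intro s
    have h1 : HasDerivAt (fun s : ℝ => (s^(m+1) / (m+1:ℝ)) • gm) (s^m • gm) s := by
      have := ((hasDerivAt_pow (m+1) s).div_const ((m:ℝ)+1)).smul_const gm
      rw [Nat.add_sub_cancel, Nat.cast_add_one, mul_div_cancel_left₀ _ hm1] at this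
      exact this
    have := (hy' s).sub h1
    rw [← add_sub_assoc]
    exact this
  have hzbound : ∀ s ∈ Set.uIcc 0 t,
      ‖(B s).mulVec (y s) + (g s - s^m • gm)‖ ≤ (3 * ε / 4) * |t|^m := by
    intro s hs
    have hst : |s| ≤ |t| := abs_le_of_mem_uIcc hs
    have hsδ : |s| ≤ δ := le_trans hst (le_of_lt (lt_of_lt_of_le hdt (min_le_left _ _)))
    have hsδ₂ : |s| < δ₂ := by
      have := lt_of_lt_of_le hdt (le_trans (min_le_right _ _) (min_le_left _ _))
      linarith [le_trans hst (le_of_lt this)]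
    have hsε : |s| ≤ ε / (4 * (K * C + 1)) :=
      le_trans hst (le_of_lt (lt_of_lt_of_le hdt (le_trans (min_le_right _ _)
        (min_le_right _ _))))
    have h1 : ‖(B s).mulVec (y s)‖ ≤ K * C * |s|^(m+1) := by
      have hs1 : |s| ≤ 1 := le_trans hsδ hδ1
      refine le_trans (hK s (abs_le.1 hs1) (y s)) ?_
      calc K * ‖y s‖ ≤ K * (C * |s|^(m+1)) :=
            mul_le_mul_of_nonneg_left (hbd s hsδ) hK0
        _ = K * C * |s|^(m+1) := by ring
    have h2 : ‖g s - s^m • gm‖ ≤ (ε/4) * |s|^m := hg2 s hsδ₂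
    have h3 : K * C * |s|^(m+1) ≤ (ε/2) * |s|^m := by
      have : K * C * |s| ≤ ε / 2 := by
        calc K * C * |s| ≤ (K * C + 1) * (ε / (4 * (K * C + 1))) := by
              refine mul_le_mul (by linarith) hsε (abs_nonneg s) (by positivity)
          _ = ε / 4 := by field_simp
          _ ≤ ε / 2 := by linarith
      calc K * C * |s|^(m+1) = (K * C * |s|) * |s|^m := by ring
        _ ≤ (ε/2) * |s|^m := mul_le_mul_of_nonneg_right this (by positivity)
    have h4 : |s|^m ≤ |t|^m := pow_le_pow_left₀ (abs_nonneg s) hst m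
    calc ‖(B s).mulVec (y s) + (g s - s^m • gm)‖
        ≤ ‖(B s).mulVec (y s)‖ + ‖g s - s^m • gm‖ := norm_add_le _ _
      _ ≤ (ε/2) * |s|^m + (ε/4) * |s|^m := add_le_add (le_trans h1 h3) h2
      _ = (3 * ε / 4) * |s|^m := by ring
      _ ≤ (3 * ε / 4) * |t|^m := mul_le_mul_of_nonneg_left h4 (by linarith)
  have hzval := mvt0 hz' hzbound
  have hz0 : z 0 = 0 := by simp [hz, hy0]
  rw [hz0, sub_zero] at hzval
  have htm : (0:ℝ) < |t|^(m+1) := by positivity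
  calc ‖(t ^ (m + 1))⁻¹ • (y t - (t ^ (m + 1) / (m + 1 : ℝ)) • gm)‖
      = (|t|^(m+1))⁻¹ * ‖z t‖ := by
        rw [norm_smul, norm_inv, Real.norm_eq_abs, abs_pow]
    _ ≤ (|t|^(m+1))⁻¹ * ((3 * ε / 4) * |t|^m * |t|) := by
        exact mul_le_mul_of_nonneg_left hzval (by positivity)
    _ = 3 * ε / 4 := by
        rw [inv_mul_eq_div]
        field_simp
        ring
    _ < ε := by linarith
end

section
/- Let Φ(t) be the fundamental matrix solution of the linear cyclic negative feedback system with Φ(0) = I, and let 1 ≤ h ≤ (ñ+1)/2. Then for every t > 0, Φ(t) maps K̄_h \ {0} into the interior of K̄_h; explicitly, for every x₀ in the closure of K_h with x₀ ≠ 0 and every t > 0, one has Φ(t)x₀ ≠ 0 and N_M(Φ(t)x₀) ≤ 2h − 1 (i.e., Φ(t)x₀ ∈ K_h \ {0}, which equals the interior of K̄_h). -/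
open Filter Topology

/-- δ₁ = −1 (index `0` in our 0-based indexing), δᵢ = 1 for the other indices. -/
def cyclicDelta (n : ℕ) [NeZero n] (i : Fin n) : ℝ := if i = 0 then -1 else 1

/-- The set Λ of vectors with all coordinates nonzero. -/
def cyclicLambda (n : ℕ) [NeZero n] : Set (Fin n → ℝ) := {x | ∀ i, x i ≠ 0}

/-- The integer valued Lyapunov function `N(x) = card {i : δᵢ xᵢ x_{i−1} < 0}`
(cyclic indices, `x₀ = xₙ`). -/
noncomputable def cyclicN (n : ℕ) [NeZero n] (x : Fin n → ℝ) : ℕ :=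
  Nat.card {i : Fin n // cyclicDelta n i * x i * x (i - 1) < 0}

/-- `N_m(x)`: the minimum of `N` over `U ∩ Λ` for all sufficiently small
neighborhoods `U` of `x`, i.e. the least value of `N` attained in every
neighborhood of `x` within `Λ`. -/
noncomputable def cyclicNm (n : ℕ) [NeZero n] (x : Fin n → ℝ) : ℕ :=
  sInf {k | ∃ᶠ y in 𝓝[cyclicLambda n] x, cyclicN n y = k}

/-- `N_M(x)`: the maximum of `N` over `U ∩ Λ` for all sufficiently small
neighborhoods `U` of `x`. -/
noncomputable def cyclicNM (n : ℕ) [NeZero n] (x : Fin n → ℝ) : ℕ :=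
  sSup {k | ∃ᶠ y in 𝓝[cyclicLambda n] x, cyclicN n y = k}

/-- The set 𝒩 on which `N` extends continuously. -/
def cyclicGood (n : ℕ) [NeZero n] : Set (Fin n → ℝ) :=
  {x | cyclicNm n x = cyclicNM n x}

/-- ñ = n if n is odd, n − 1 if n is even. -/
def ntilde (n : ℕ) : ℕ := if n % 2 = 1 then n else n - 1

/-- A linear cyclic negative feedback system: coefficients `diag t i = a_{ii}(t)`
and `sub t i = a_{i,i−1}(t)` (cyclically, `sub t 0 = a_{1,n}(t)`), all continuous,
with `a_{1,n}(t) < 0` and `a_{i,i−1}(t) > 0` for `i ≠ 1`. -/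
structure LinCNF (n : ℕ) [NeZero n] where
  diag : ℝ → Fin n → ℝ
  sub : ℝ → Fin n → ℝ
  cont_diag : ∀ i, Continuous fun t => diag t i
  cont_sub : ∀ i, Continuous fun t => sub t i
  sub_neg : ∀ t, sub t 0 < 0
  sub_pos : ∀ t (i : Fin n), i ≠ 0 → 0 < sub t i

/-- `x` is a solution of the linear system `ẋᵢ = a_{ii}(t)xᵢ + a_{i,i−1}(t)x_{i−1}`. -/
def LinCNF.IsSolution {n : ℕ} [NeZero n] (S : LinCNF n) (x : ℝ → Fin n → ℝ) : Prop :=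
  ∀ (t : ℝ) (i : Fin n),
    HasDerivAt (fun s => x s i) (S.diag t i * x t i + S.sub t i * x t (i - 1)) t

/-- `Φ` is the fundamental (matrix) solution, `Φ(0) = I`. -/
def LinCNF.IsFundamental {n : ℕ} [NeZero n] (S : LinCNF n)
    (Φ : ℝ → (Fin n → ℝ) →ₗ[ℝ] (Fin n → ℝ)) : Prop :=
  Φ 0 = LinearMap.id ∧ ∀ x₀ : Fin n → ℝ, S.IsSolution fun t => Φ t x₀

/-- The cone `K_h = {0} ∪ {x : N_M(x) ≤ 2h − 1}`. -/
def Kcone (n : ℕ) [NeZero n] (h : ℕ) : Set (Fin n → ℝ) :=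
  {0} ∪ {x | cyclicNM n x ≤ 2 * h - 1}

/-- The complementary cone `K^h = {0} ∪ {x : N_m(x) > 2h − 1}`. -/
def KconeUp (n : ℕ) [NeZero n] (h : ℕ) : Set (Fin n → ℝ) :=
  {0} ∪ {x | 2 * h - 1 < cyclicNm n x}

namespace S5

variable {n : ℕ} [NeZero n]

open Fin.NatCast Fin.CommRing

noncomputable def sgn (t : ℝ) : ℝ := if t < 0 then -1 else 1

lemma sgn_cases (t : ℝ) : sgn t = 1 ∨ sgn t = -1 := by
  unfold sgn; split <;> simp

lemma sgn_sq (t : ℝ) : sgn t * sgn t = 1 := by rcases sgn_cases t with h | h <;> rw [h] <;> norm_num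

lemma sgn_ne_zero (t : ℝ) : sgn t ≠ 0 := by rcases sgn_cases t with h | h <;> rw [h] <;> norm_num

lemma mul_sgn_pos {t : ℝ} (h : t ≠ 0) : 0 < t * sgn t := by
  unfold sgn; rcases lt_trichotomy t 0 with h' | h' | h'
  · rw [if_pos h']; nlinarith
  · exact absurd h' h
  · rw [if_neg (not_lt.2 h'.le)]; nlinarith

lemma delta_cases (i : Fin n) : cyclicDelta n i = 1 ∨ cyclicDelta n i = -1 := by
  unfold cyclicDelta; split <;> simp

lemma delta_sq (i : Fin n) : cyclicDelta n i * cyclicDelta n i = 1 := by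
  rcases delta_cases i with h | h <;> rw [h] <;> norm_num

lemma delta_ne_zero (i : Fin n) : cyclicDelta n i ≠ 0 := by
  rcases delta_cases i with h | h <;> rw [h] <;> norm_num

/-- same-sign transitivity -/
lemma pos_trans {p q r : ℝ} (h1 : 0 < p * q) (h2 : 0 < q * r) : 0 < p * r := by
  nlinarith [sq_nonneg q, mul_pos h1 h2, sq_nonneg (q*r)]

lemma lt_zero_iff_of_mul_pos {p q : ℝ} (h : 0 < p * q) : p < 0 ↔ q < 0 := by
  constructor <;> intro h' <;> nlinarith

/-- pair sign function -/
noncomputable def pr (τ : Fin n → ℝ) (i : Fin n) : ℝ := cyclicDelta n i * τ i * τ (i - 1)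

noncomputable def cnt (τ : Fin n → ℝ) : ℕ := (Finset.univ.filter (fun i => pr τ i < 0)).card

lemma cyclicN_eq_cnt (y : Fin n → ℝ) : cyclicN n y = cnt y := by
  unfold cyclicN cnt pr
  rw [Nat.card_eq_fintype_card]
  simp [Fintype.card_subtype]

lemma cnt_congr {y τ : Fin n → ℝ} (hs : ∀ i, 0 < y i * τ i) : cnt y = cnt τ := by
  unfold cnt
  congr 1
  apply Finset.filter_congr
  intro i _
  unfold pr
  have h1 := hs i
  have h2 := hs (i - 1)
  have key : (cyclicDelta n i * y i * y (i-1)) * (cyclicDelta n i * τ i * τ (i-1))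
      = (cyclicDelta n i * cyclicDelta n i) * ((y i * τ i) * (y (i-1) * τ (i-1))) := by ring
  rw [delta_sq, one_mul] at key
  exact lt_zero_iff_of_mul_pos (key ▸ mul_pos h1 h2)


-- Fin arithmetic helpers
lemma fin_cast_succ (k : ℕ) : ((k+1 : ℕ) : Fin n) = (k : Fin n) + 1 := by push_cast; ring

lemma fin_sub_succ (i : Fin n) (k : ℕ) : i - ((k+1 : ℕ) : Fin n) = (i - 1) - (k : Fin n) := by
  rw [fin_cast_succ]; ring

lemma exists_back {a : Fin n → ℝ} (ha : a ≠ 0) (i : Fin n) :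
    ∃ k : ℕ, a (i - (k : Fin n)) ≠ 0 := by
  obtain ⟨j, hj⟩ := Function.ne_iff.1 ha
  refine ⟨((i - j : Fin n) : ℕ), ?_⟩
  rw [Fin.cast_val_eq_self]
  simpa using hj

open Classical in
noncomputable def mb (a : Fin n → ℝ) (i : Fin n) : ℕ :=
  if h : ∃ k : ℕ, a (i - (k : Fin n)) ≠ 0 then Nat.find h else 0

lemma mb_spec_min {a : Fin n → ℝ} (ha : a ≠ 0) (i : Fin n) :
    a (i - ((mb a i : ℕ) : Fin n)) ≠ 0 ∧ ∀ k < mb a i, a (i - (k : Fin n)) = 0 := by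
  unfold mb; split
  case isTrue h =>
    refine ⟨Nat.find_spec h, fun k hk => ?_⟩
    by_contra h'
    exact absurd (Nat.find_min' h h') (by omega)
  case isFalse h => exact absurd (exists_back ha i) h

lemma mb_spec {a : Fin n → ℝ} (ha : a ≠ 0) (i : Fin n) : a (i - ((mb a i : ℕ) : Fin n)) ≠ 0 :=
  (mb_spec_min ha i).1

lemma mb_min {a : Fin n → ℝ} (ha : a ≠ 0) (i : Fin n) {k : ℕ} (hk : k < mb a i) :
    a (i - (k : Fin n)) = 0 := (mb_spec_min ha i).2 k hk

lemma mb_le {a : Fin n → ℝ} (ha : a ≠ 0) (i : Fin n) {k : ℕ} (hk : a (i - (k : Fin n)) ≠ 0) :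
    mb a i ≤ k := by
  by_contra h
  exact hk (mb_min ha i (by omega))

lemma mb_lt_n {a : Fin n → ℝ} (ha : a ≠ 0) (i : Fin n) : mb a i < n := by
  obtain ⟨j, hj⟩ := Function.ne_iff.1 ha
  have : mb a i ≤ ((i - j : Fin n) : ℕ) := by
    apply mb_le ha
    rw [Fin.cast_val_eq_self]
    simpa using hj
  exact lt_of_le_of_lt this (Fin.is_lt _)

lemma mb_eq_zero {a : Fin n → ℝ} (ha : a ≠ 0) {i : Fin n} (hi : a i ≠ 0) : mb a i = 0 := by
  have := mb_le ha i (k := 0) (by simpa using hi); omega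

lemma mb_pos {a : Fin n → ℝ} (ha : a ≠ 0) {i : Fin n} (hi : a i = 0) : 0 < mb a i := by
  rcases Nat.eq_zero_or_pos (mb a i) with h | h
  · exact absurd (by simpa [h] using mb_spec ha i) (by simp [hi])
  · exact h

lemma mb_rec {a : Fin n → ℝ} (ha : a ≠ 0) {i : Fin n} (hi : a i = 0) :
    mb a i = mb a (i - 1) + 1 := by
  have hpos := mb_pos ha hi
  have h1 : mb a (i - 1) ≤ mb a i - 1 := by
    apply mb_le ha
    have : i - 1 - ((mb a i - 1 : ℕ) : Fin n) = i - ((mb a i - 1 + 1 : ℕ) : Fin n) := by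
      rw [fin_sub_succ]
    rw [this]
    have : mb a i - 1 + 1 = mb a i := by omega
    rw [this]
    exact mb_spec ha i
  have h2 : mb a i ≤ mb a (i - 1) + 1 := by
    apply mb_le ha
    rw [fin_sub_succ]
    exact mb_spec ha (i - 1)
  omega

noncomputable def Sp (a : Fin n → ℝ) (i : Fin n) : ℝ :=
  sgn (a (i - ((mb a i : ℕ) : Fin n))) * ∏ l ∈ Finset.range (mb a i), cyclicDelta n (i - (l : Fin n))

noncomputable def Sm (a : Fin n → ℝ) (i : Fin n) : ℝ := (-1)^(mb a i) * Sp a i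

lemma sgn_cases' (t : ℝ) : sgn t = 1 ∨ sgn t = -1 := by unfold sgn; split <;> simp

lemma prod_pm {ι : Type*} {s : Finset ι} {g : ι → ℝ} (h : ∀ l, g l = 1 ∨ g l = -1) :
    (∏ l ∈ s, g l) = 1 ∨ (∏ l ∈ s, g l) = -1 := by
  classical
  induction s using Finset.induction with
  | empty => simp
  | insert _ _ hx ih =>
    rw [Finset.prod_insert hx]
    rcases h _ with h' | h' <;> rcases ih with h'' | h'' <;> rw [h', h''] <;> norm_num

lemma Sp_cases (a : Fin n → ℝ) (i : Fin n) : Sp a i = 1 ∨ Sp a i = -1 := by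
  unfold Sp
  have h1 := sgn_cases' (a (i - ((mb a i : ℕ) : Fin n)))
  have h2 := prod_pm (s := Finset.range (mb a i)) (g := fun l => cyclicDelta n (i - (l : Fin n)))
    (fun l => by by_cases hh : i - (l : Fin n) = 0 <;> simp [cyclicDelta, hh])
  rcases h1 with h | h <;> rcases h2 with h' | h' <;> rw [h, h'] <;> norm_num

lemma Sp_sq (a : Fin n → ℝ) (i : Fin n) : Sp a i * Sp a i = 1 := by
  rcases Sp_cases a i with h | h <;> rw [h] <;> norm_num
lemma Sp_ne_zero (a : Fin n → ℝ) (i : Fin n) : Sp a i ≠ 0 := by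
  rcases Sp_cases a i with h | h <;> rw [h] <;> norm_num
lemma Sm_cases (a : Fin n → ℝ) (i : Fin n) : Sm a i = 1 ∨ Sm a i = -1 := by
  unfold Sm
  have h2 : ((-1:ℝ))^(mb a i) = 1 ∨ ((-1:ℝ))^(mb a i) = -1 := by
    rcases Nat.even_or_odd (mb a i) with he | ho
    · left; exact he.neg_one_pow
    · right; exact ho.neg_one_pow
  rcases Sp_cases a i with h | h <;> rcases h2 with h' | h' <;> rw [h, h'] <;> norm_num
lemma Sm_sq (a : Fin n → ℝ) (i : Fin n) : Sm a i * Sm a i = 1 := by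
  rcases Sm_cases a i with h | h <;> rw [h] <;> norm_num
lemma Sm_ne_zero (a : Fin n → ℝ) (i : Fin n) : Sm a i ≠ 0 := by
  rcases Sm_cases a i with h | h <;> rw [h] <;> norm_num

lemma Sp_of_ne {a : Fin n → ℝ} (ha : a ≠ 0) {i : Fin n} (hi : a i ≠ 0) : Sp a i = sgn (a i) := by
  unfold Sp; rw [mb_eq_zero ha hi]; simp
lemma Sm_of_ne {a : Fin n → ℝ} (ha : a ≠ 0) {i : Fin n} (hi : a i ≠ 0) : Sm a i = sgn (a i) := by
  unfold Sm; rw [mb_eq_zero ha hi, Sp_of_ne ha hi]; simp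

lemma Sp_rec {a : Fin n → ℝ} (ha : a ≠ 0) {i : Fin n} (hi : a i = 0) :
    Sp a i = cyclicDelta n i * Sp a (i - 1) := by
  unfold Sp
  rw [mb_rec ha hi]
  rw [Finset.prod_range_succ']
  have e1 : ∀ l : ℕ, i - ((l+1 : ℕ) : Fin n) = (i - 1) - (l : Fin n) := fun l => fin_sub_succ i l
  simp only [e1]
  have e2 : i - ((0:ℕ) : Fin n) = i := by simp
  rw [e2]
  ring

lemma Sm_rec {a : Fin n → ℝ} (ha : a ≠ 0) {i : Fin n} (hi : a i = 0) :
    Sm a i = -(cyclicDelta n i * Sm a (i - 1)) := by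
  unfold Sm
  rw [mb_rec ha hi, Sp_rec ha hi, pow_succ]
  ring

-- ### forward search and fibers

lemma exists_fwd {a : Fin n → ℝ} (ha : a ≠ 0) (i : Fin n) :
    ∃ k : ℕ, a (i + (k : Fin n)) ≠ 0 := by
  obtain ⟨j, hj⟩ := Function.ne_iff.1 ha
  refine ⟨((j - i : Fin n) : ℕ), ?_⟩
  rw [Fin.cast_val_eq_self]
  have e : i + (j - i) = j := by ring
  rw [e]; exact hj

open Classical in
noncomputable def rf (a : Fin n → ℝ) (i : Fin n) : ℕ :=
  if h : ∃ k : ℕ, a (i + (k : Fin n)) ≠ 0 then Nat.find h else 0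

lemma rf_spec_min {a : Fin n → ℝ} (ha : a ≠ 0) (i : Fin n) :
    a (i + ((rf a i : ℕ) : Fin n)) ≠ 0 ∧ ∀ k < rf a i, a (i + (k : Fin n)) = 0 := by
  unfold rf; split
  case isTrue h =>
    refine ⟨Nat.find_spec h, fun k hk => ?_⟩
    by_contra h'
    exact absurd (Nat.find_min' h h') (by omega)
  case isFalse h => exact absurd (exists_fwd ha i) h

lemma rf_spec {a : Fin n → ℝ} (ha : a ≠ 0) (i : Fin n) :
    a (i + ((rf a i : ℕ) : Fin n)) ≠ 0 := (rf_spec_min ha i).1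

lemma rf_min {a : Fin n → ℝ} (ha : a ≠ 0) (i : Fin n) {k : ℕ} (hk : k < rf a i) :
    a (i + (k : Fin n)) = 0 := (rf_spec_min ha i).2 k hk

lemma rf_le {a : Fin n → ℝ} (ha : a ≠ 0) (i : Fin n) {k : ℕ} (hk : a (i + (k : Fin n)) ≠ 0) :
    rf a i ≤ k := by
  by_contra h
  exact hk (rf_min ha i (by omega))

noncomputable def ff (a : Fin n → ℝ) (i : Fin n) : Fin n := i + ((rf a i : ℕ) : Fin n)

lemma ff_spec {a : Fin n → ℝ} (ha : a ≠ 0) (i : Fin n) : a (ff a i) ≠ 0 := rf_spec ha i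

lemma fin_cast_sub {p q : ℕ} (h : p ≤ q) :
    ((q - p : ℕ) : Fin n) = (q : Fin n) - (p : Fin n) := by
  have h2 : ((q - p : ℕ) : Fin n) + ((p : ℕ) : Fin n) = ((q : ℕ) : Fin n) := by
    rw [← Nat.cast_add, Nat.sub_add_cancel h]
  exact eq_sub_of_add_eq h2

lemma zeros_back {a : Fin n → ℝ} (ha : a ≠ 0) {i : Fin n} {l : ℕ}
    (h1 : 1 ≤ l) (h2 : l ≤ mb a (i - 1)) : a (i - (l : Fin n)) = 0 := by
  have hz : a ((i - 1) - ((l - 1 : ℕ) : Fin n)) = 0 := mb_min ha (i - 1) (by omega)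
  have e := fin_sub_succ i (l - 1)
  rw [show l - 1 + 1 = l by omega] at e
  rw [e]; exact hz

lemma fiber_eq {a : Fin n → ℝ} (ha : a ≠ 0) {i : Fin n} (hi : a i ≠ 0) :
    Finset.univ.filter (fun k => ff a k = i)
      = (Finset.range (mb a (i - 1) + 1)).image (fun l : ℕ => i - (l : Fin n)) := by
  ext k
  simp only [Finset.mem_filter, Finset.mem_univ, true_and, Finset.mem_image, Finset.mem_range]
  simp only [ff]
  constructor
  · intro hk
    have hk' : k = i - ((rf a k : ℕ) : Fin n) := eq_sub_of_add_eq hk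
    refine ⟨rf a k, ?_, hk'.symm⟩
    by_contra hgt
    push_neg at hgt
    have hmb := mb_spec ha (i - 1)
    rw [(fin_sub_succ i (mb a (i - 1))).symm] at hmb
    have hlt : rf a k - (mb a (i - 1) + 1) < rf a k := by omega
    have hz := rf_min ha k hlt
    have e3 : k + ((rf a k - (mb a (i - 1) + 1) : ℕ) : Fin n)
        = i - ((mb a (i - 1) + 1 : ℕ) : Fin n) := by
      rw [fin_cast_sub (p := mb a (i - 1) + 1) (q := rf a k) (by omega)]
      linear_combination hk
    rw [e3] at hz
    exact hmb hz
  · rintro ⟨l, hl, rfl⟩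
    have hrf : rf a (i - (l : Fin n)) = l := by
      have hle : rf a (i - (l : Fin n)) ≤ l := by
        apply rf_le ha
        have e : i - (l : Fin n) + (l : Fin n) = i := by ring
        rw [e]; exact hi
      rcases Nat.lt_or_ge (rf a (i - (l : Fin n))) l with hlt | hge
      · exfalso
        have hsp := rf_spec ha (i - (l : Fin n))
        have e2 : i - (l : Fin n) + ((rf a (i - (l : Fin n)) : ℕ) : Fin n)
            = i - ((l - rf a (i - (l : Fin n)) : ℕ) : Fin n) := by
          rw [fin_cast_sub hlt.le]; ring
        rw [e2] at hsp
        exact hsp (zeros_back ha (by omega) (by omega))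
      · omega
    show i - (l : Fin n) + ((rf a (i - (l : Fin n)) : ℕ) : Fin n) = i
    rw [hrf]; ring

lemma sub_cast_injOn (i : Fin n) {M : ℕ} (hM : M < n) :
    Set.InjOn (fun l : ℕ => i - (l : Fin n)) (Finset.range (M + 1)) := by
  intro p hp q hq hpq
  simp only [Finset.coe_range, Set.mem_Iio] at hp hq
  have h1 : (p : Fin n) = (q : Fin n) := by
    exact sub_right_injective hpq
  have := congrArg Fin.val h1
  rw [Fin.val_cast_of_lt (by omega), Fin.val_cast_of_lt (by omega)] at this
  exact this

lemma cnt_fiber_sum {a : Fin n → ℝ} (ha : a ≠ 0) (τ : Fin n → ℝ) :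
    cnt τ = ∑ i ∈ Finset.univ.filter (fun i => a i ≠ 0),
      ((Finset.range (mb a (i - 1) + 1)).filter (fun l : ℕ => pr τ (i - (l : Fin n)) < 0)).card := by
  classical
  unfold cnt
  rw [Finset.card_eq_sum_card_fiberwise
    (f := ff a) (t := Finset.univ.filter (fun i => a i ≠ 0))
    (fun k _ => by simpa using ff_spec ha k)]
  apply Finset.sum_congr rfl
  intro i hi
  simp only [Finset.mem_filter, Finset.mem_univ, true_and] at hi
  have h1 : (Finset.univ.filter (fun k => pr τ k < 0)).filter (fun k => ff a k = i)
      = (Finset.univ.filter (fun k => ff a k = i)).filter (fun k => pr τ k < 0) := by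
    rw [Finset.filter_filter, Finset.filter_filter]
    apply Finset.filter_congr
    intro k _
    constructor
    · exact fun hh => ⟨hh.2, hh.1⟩
    · exact fun hh => ⟨hh.2, hh.1⟩
  rw [h1, fiber_eq ha hi, Finset.filter_image]
  rw [Finset.card_image_of_injOn
    ((sub_cast_injOn i (M := mb a (i - 1)) (mb_lt_n ha (i - 1))).mono
      (by intro l hl; simp only [Finset.coe_filter, Set.mem_setOf_eq] at hl
          simp only [Finset.coe_range, Set.mem_Iio]
          exact (Finset.mem_range.1 hl.1)))]

-- ### parity of products

lemma pr_ne_zero {τ : Fin n → ℝ} (hτ : ∀ k, τ k ≠ 0) (k : Fin n) : pr τ k ≠ 0 := by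
  unfold pr
  exact mul_ne_zero (mul_ne_zero (delta_ne_zero k) (hτ k)) (hτ (k - 1))

lemma even_filter_iff_prod_pos {K : ℕ} {g : ℕ → ℝ} (hg : ∀ l, l < K → g l ≠ 0) :
    (0 < ∏ l ∈ Finset.range K, g l) ↔ Even ((Finset.range K).filter (fun l => g l < 0)).card := by
  classical
  induction K with
  | zero => simp
  | succ K ih =>
    rw [Finset.prod_range_succ, Finset.range_add_one, Finset.filter_insert]
    have hK := hg K (by omega)
    have ihK := ih (fun l hl => hg l (by omega))
    rcases lt_trichotomy (g K) 0 with h | h | h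
    · rw [if_pos h, Finset.card_insert_of_notMem (by
        intro hmem
        exact absurd (Finset.mem_of_mem_filter _ hmem) (by simp))]
      constructor
      · intro hp
        have hneg : (∏ l ∈ Finset.range K, g l) < 0 := by
          rcases lt_trichotomy (∏ l ∈ Finset.range K, g l) 0 with h' | h' | h'
          · exact h'
          · exfalso; rw [h'] at hp; simp at hp
          · nlinarith
        rw [Nat.even_add_one]
        intro hcon
        exact absurd (ihK.2 hcon) (by nlinarith)
      · intro hp
        rw [Nat.even_add_one] at hp
        have : ¬ (0 < ∏ l ∈ Finset.range K, g l) := fun hc => hp (ihK.1 hc)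
        have hneg : (∏ l ∈ Finset.range K, g l) < 0 := by
          rcases lt_trichotomy (∏ l ∈ Finset.range K, g l) 0 with h' | h' | h'
          · exact h'
          · exfalso
            exact absurd h' (Finset.prod_ne_zero_iff.2 (fun l hl => hg l (by have := Finset.mem_range.1 hl; omega)))
          · exact absurd h' this
        nlinarith
    · exact absurd h hK
    · rw [if_neg (by exact not_lt.2 h.le)]
      constructor
      · intro hp
        apply ihK.1
        nlinarith
      · intro hp
        have := ihK.2 hp
        nlinarith

lemma pos_of_mul_pos_right' {X c : ℝ} (h : 0 < X * c) (hc : 0 < c) : 0 < X := by nlinarith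

lemma pos_iff_of_mul_pos {p q : ℝ} (h : 0 < p * q) : (0 < p ↔ 0 < q) := by
  constructor <;> intro h' <;> nlinarith

-- ### telescoping and per-fiber comparisons

lemma telescope (τ : Fin n → ℝ) (i : Fin n) (M : ℕ) :
    (∏ l ∈ Finset.range (M+1), pr τ (i - (l : Fin n))) * (τ i * τ (i - ((M+1 : ℕ) : Fin n)))
      = (∏ l ∈ Finset.range (M+1), cyclicDelta n (i - (l : Fin n)))
        * (∏ l ∈ Finset.range (M+1), τ (i - (l : Fin n)))^2
        * (τ (i - ((M+1 : ℕ) : Fin n)))^2 := by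
  have e0 : ∀ l : ℕ, i - (l : Fin n) - 1 = i - ((l + 1 : ℕ) : Fin n) := by
    intro l; rw [fin_cast_succ]; ring
  have hpr : (∏ l ∈ Finset.range (M+1), pr τ (i - (l : Fin n)))
      = (∏ l ∈ Finset.range (M+1), cyclicDelta n (i - (l : Fin n)))
        * (∏ l ∈ Finset.range (M+1), τ (i - (l : Fin n)))
        * (∏ l ∈ Finset.range (M+1), τ (i - ((l + 1 : ℕ) : Fin n))) := by
    rw [← Finset.prod_mul_distrib, ← Finset.prod_mul_distrib]
    apply Finset.prod_congr rfl
    intro l _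
    unfold pr
    rw [e0 l]
  have htel : τ i * (∏ l ∈ Finset.range (M+1), τ (i - ((l + 1 : ℕ) : Fin n)))
      = (∏ l ∈ Finset.range (M+1), τ (i - (l : Fin n))) * τ (i - ((M+1 : ℕ) : Fin n)) := by
    rw [Finset.prod_range_succ (fun l => τ (i - ((l + 1 : ℕ) : Fin n))) M]
    rw [Finset.prod_range_succ' (fun l => τ (i - (l : Fin n))) M]
    have : i - ((0 : ℕ) : Fin n) = i := by simp
    rw [this]
    ring
  rw [hpr]
  set D := (∏ l ∈ Finset.range (M+1), cyclicDelta n (i - (l : Fin n)))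
  set A := (∏ l ∈ Finset.range (M+1), τ (i - (l : Fin n)))
  set B := (∏ l ∈ Finset.range (M+1), τ (i - ((l + 1 : ℕ) : Fin n)))
  set e := τ (i - ((M+1 : ℕ) : Fin n))
  linear_combination (D * A * e) * htel

lemma prods_pos {a : Fin n → ℝ} (ha : a ≠ 0) {i : Fin n} (hi : a i ≠ 0)
    {σ τ : Fin n → ℝ} (hσ : ∀ k, σ k ≠ 0) (hτ : ∀ k, τ k ≠ 0)
    (hei : 0 < σ i * τ i)
    (hee : 0 < σ (i - ((mb a (i-1) + 1 : ℕ) : Fin n)) * τ (i - ((mb a (i-1) + 1 : ℕ) : Fin n))) :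
    0 < (∏ l ∈ Finset.range (mb a (i-1) + 1), pr σ (i - (l : Fin n)))
      * (∏ l ∈ Finset.range (mb a (i-1) + 1), pr τ (i - (l : Fin n))) := by
  set M := mb a (i-1)
  have t1 := telescope σ i M
  have t2 := telescope τ i M
  set D := (∏ l ∈ Finset.range (M+1), cyclicDelta n (i - (l : Fin n))) with hD
  set Aσ := (∏ l ∈ Finset.range (M+1), σ (i - (l : Fin n))) with hAσ
  set Aτ := (∏ l ∈ Finset.range (M+1), τ (i - (l : Fin n))) with hAτ
  set Pσ := (∏ l ∈ Finset.range (M+1), pr σ (i - (l : Fin n)))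
  set Pτ := (∏ l ∈ Finset.range (M+1), pr τ (i - (l : Fin n)))
  set eσ := σ (i - ((M+1 : ℕ) : Fin n))
  set eτ := τ (i - ((M+1 : ℕ) : Fin n))
  have hDne : D ≠ 0 := Finset.prod_ne_zero_iff.2 (fun l _ => delta_ne_zero _)
  have hAσne : Aσ ≠ 0 := Finset.prod_ne_zero_iff.2 (fun l _ => hσ _)
  have hAτne : Aτ ≠ 0 := Finset.prod_ne_zero_iff.2 (fun l _ => hτ _)
  have heσ : eσ ≠ 0 := hσ _
  have heτ : eτ ≠ 0 := hτ _
  have key : (Pσ * Pτ) * ((σ i * τ i) * (eσ * eτ))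
      = (D * Aσ^2 * eσ^2) * (D * Aτ^2 * eτ^2) := by
    calc (Pσ * Pτ) * ((σ i * τ i) * (eσ * eτ))
        = (Pσ * (σ i * eσ)) * (Pτ * (τ i * eτ)) := by ring
      _ = (D * Aσ^2 * eσ^2) * (D * Aτ^2 * eτ^2) := by rw [t1, t2]
  have hrhs : 0 < (D * Aσ^2 * eσ^2) * (D * Aτ^2 * eτ^2) := by
    have : (D * Aσ^2 * eσ^2) * (D * Aτ^2 * eτ^2) = (D * Aσ * Aτ * eσ * eτ)^2 := by ring
    rw [this]
    exact pow_two_pos_of_ne_zero (by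
      exact mul_ne_zero (mul_ne_zero (mul_ne_zero (mul_ne_zero hDne hAσne) hAτne) heσ) heτ)
  have hc : 0 < (σ i * τ i) * (eσ * eτ) := mul_pos hei hee
  exact pos_of_mul_pos_right' (by rw [key]; exact hrhs) hc

lemma pr_Sp_pos {a : Fin n → ℝ} (ha : a ≠ 0) {k : Fin n} (hk : a k = 0) : 0 < pr (Sp a) k := by
  unfold pr
  rw [Sp_rec ha hk]
  have h1 := delta_sq k
  have h2 := Sp_sq a (k - 1)
  nlinarith

lemma pr_Sm_neg {a : Fin n → ℝ} (ha : a ≠ 0) {k : Fin n} (hk : a k = 0) : pr (Sm a) k < 0 := by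
  unfold pr
  rw [Sm_rec ha hk]
  have h1 := delta_sq k
  have h2 := Sm_sq a (k - 1)
  nlinarith

lemma Sp_all_ne (a : Fin n → ℝ) : ∀ k, Sp a k ≠ 0 := fun k => Sp_ne_zero a k
lemma Sm_all_ne (a : Fin n → ℝ) : ∀ k, Sm a k ≠ 0 := fun k => Sm_ne_zero a k

lemma endpoint_ne {a : Fin n → ℝ} (ha : a ≠ 0) (i : Fin n) :
    a (i - ((mb a (i-1) + 1 : ℕ) : Fin n)) ≠ 0 := by
  have := mb_spec ha (i - 1)
  rwa [(fin_sub_succ i (mb a (i - 1))).symm] at this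

/-- endpoint sign agreement helper: σ agrees with a at nonzero coords ⇒ agrees with Sp and Sm -/
lemma agree_Sp {a : Fin n → ℝ} (ha : a ≠ 0) {σ : Fin n → ℝ}
    (hg : ∀ k, a k ≠ 0 → 0 < σ k * a k) {k : Fin n} (hk : a k ≠ 0) : 0 < σ k * Sp a k := by
  rw [Sp_of_ne ha hk]
  exact pos_trans (hg k hk) (mul_sgn_pos hk)

lemma agree_Sm {a : Fin n → ℝ} (ha : a ≠ 0) {σ : Fin n → ℝ}
    (hg : ∀ k, a k ≠ 0 → 0 < σ k * a k) {k : Fin n} (hk : a k ≠ 0) : 0 < σ k * Sm a k := by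
  rw [Sm_of_ne ha hk]
  exact pos_trans (hg k hk) (mul_sgn_pos hk)

lemma fiber_min {a : Fin n → ℝ} (ha : a ≠ 0) {i : Fin n} (hi : a i ≠ 0)
    {σ : Fin n → ℝ} (hσ : ∀ k, σ k ≠ 0) (hg : ∀ k, a k ≠ 0 → 0 < σ k * a k) :
    ((Finset.range (mb a (i-1) + 1)).filter (fun l : ℕ => pr (Sp a) (i - (l : Fin n)) < 0)).card
      ≤ ((Finset.range (mb a (i-1) + 1)).filter (fun l : ℕ => pr σ (i - (l : Fin n)) < 0)).card := by
  classical
  set M := mb a (i-1) with hM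
  have hprod := prods_pos ha hi hσ (Sp_all_ne a) (agree_Sp ha hg hi)
    (agree_Sp ha hg (endpoint_ne ha i))
  have hp1 := even_filter_iff_prod_pos (K := M+1)
    (g := fun l : ℕ => pr σ (i - (l : Fin n))) (fun l _ => pr_ne_zero hσ _)
  have hp2 := even_filter_iff_prod_pos (K := M+1)
    (g := fun l : ℕ => pr (Sp a) (i - (l : Fin n))) (fun l _ => pr_ne_zero (Sp_all_ne a) _)
  have hpar : Even ((Finset.range (M+1)).filter (fun l : ℕ => pr σ (i - (l : Fin n)) < 0)).card
      ↔ Even ((Finset.range (M+1)).filter (fun l : ℕ => pr (Sp a) (i - (l : Fin n)) < 0)).card := by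
    rw [← hp1, ← hp2]
    exact pos_iff_of_mul_pos hprod
  have hle1 : ((Finset.range (M+1)).filter (fun l : ℕ => pr (Sp a) (i - (l : Fin n)) < 0)).card ≤ 1 := by
    have hsub : ((Finset.range (M+1)).filter (fun l : ℕ => pr (Sp a) (i - (l : Fin n)) < 0))
        ⊆ {0} := by
      intro l hl
      simp only [Finset.mem_filter, Finset.mem_range] at hl
      simp only [Finset.mem_singleton]
      by_contra hne
      have hz : a (i - (l : Fin n)) = 0 := zeros_back ha (by omega) (by omega)
      exact absurd (pr_Sp_pos ha hz) (by linarith [hl.2])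
    calc _ ≤ ({0} : Finset ℕ).card := Finset.card_le_card hsub
      _ = 1 := rfl
  rw [Nat.even_iff, Nat.even_iff] at hpar
  omega

lemma fiber_max {a : Fin n → ℝ} (ha : a ≠ 0) {i : Fin n} (hi : a i ≠ 0)
    {σ : Fin n → ℝ} (hσ : ∀ k, σ k ≠ 0) (hg : ∀ k, a k ≠ 0 → 0 < σ k * a k) :
    ((Finset.range (mb a (i-1) + 1)).filter (fun l : ℕ => pr σ (i - (l : Fin n)) < 0)).card
      ≤ ((Finset.range (mb a (i-1) + 1)).filter (fun l : ℕ => pr (Sm a) (i - (l : Fin n)) < 0)).card := by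
  classical
  set M := mb a (i-1) with hM
  have hprod := prods_pos ha hi hσ (Sm_all_ne a) (agree_Sm ha hg hi)
    (agree_Sm ha hg (endpoint_ne ha i))
  have hp1 := even_filter_iff_prod_pos (K := M+1)
    (g := fun l : ℕ => pr σ (i - (l : Fin n))) (fun l _ => pr_ne_zero hσ _)
  have hp2 := even_filter_iff_prod_pos (K := M+1)
    (g := fun l : ℕ => pr (Sm a) (i - (l : Fin n))) (fun l _ => pr_ne_zero (Sm_all_ne a) _)
  have hpar : Even ((Finset.range (M+1)).filter (fun l : ℕ => pr σ (i - (l : Fin n)) < 0)).card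
      ↔ Even ((Finset.range (M+1)).filter (fun l : ℕ => pr (Sm a) (i - (l : Fin n)) < 0)).card := by
    rw [← hp1, ← hp2]
    exact pos_iff_of_mul_pos hprod
  have hge : M ≤ ((Finset.range (M+1)).filter (fun l : ℕ => pr (Sm a) (i - (l : Fin n)) < 0)).card := by
    have hsub : (Finset.range (M+1)).filter (fun l : ℕ => l ≠ 0)
        ⊆ (Finset.range (M+1)).filter (fun l : ℕ => pr (Sm a) (i - (l : Fin n)) < 0) := by
      intro l hl
      simp only [Finset.mem_filter, Finset.mem_range] at hl ⊢
      refine ⟨hl.1, ?_⟩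
      have h0 := hl.2
      have h1 := hl.1
      exact pr_Sm_neg ha (zeros_back ha (by omega) (by omega))
    have hcard : ((Finset.range (M+1)).filter (fun l : ℕ => l ≠ 0)).card = M := by
      rw [Finset.filter_ne' (Finset.range (M+1)) 0,
        Finset.card_erase_of_mem (by simp), Finset.card_range]
      omega
    calc M = _ := hcard.symm
      _ ≤ _ := Finset.card_le_card hsub
  have hub : ((Finset.range (M+1)).filter (fun l : ℕ => pr σ (i - (l : Fin n)) < 0)).card ≤ M + 1 := by
    calc _ ≤ (Finset.range (M+1)).card := Finset.card_filter_le _ _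
      _ = M + 1 := Finset.card_range _
  have hub2 : ((Finset.range (M+1)).filter (fun l : ℕ => pr (Sm a) (i - (l : Fin n)) < 0)).card ≤ M + 1 := by
    calc _ ≤ (Finset.range (M+1)).card := Finset.card_filter_le _ _
      _ = M + 1 := Finset.card_range _
  rw [Nat.even_iff, Nat.even_iff] at hpar
  omega

lemma cnt_min {a : Fin n → ℝ} (ha : a ≠ 0) {σ : Fin n → ℝ}
    (hσ : ∀ k, σ k ≠ 0) (hg : ∀ k, a k ≠ 0 → 0 < σ k * a k) :
    cnt (Sp a) ≤ cnt σ := by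
  rw [cnt_fiber_sum ha (Sp a), cnt_fiber_sum ha σ]
  apply Finset.sum_le_sum
  intro i hi
  simp only [Finset.mem_filter, Finset.mem_univ, true_and] at hi
  exact fiber_min ha hi hσ hg

lemma cnt_max {a : Fin n → ℝ} (ha : a ≠ 0) {σ : Fin n → ℝ}
    (hσ : ∀ k, σ k ≠ 0) (hg : ∀ k, a k ≠ 0 → 0 < σ k * a k) :
    cnt σ ≤ cnt (Sm a) := by
  rw [cnt_fiber_sum ha (Sm a), cnt_fiber_sum ha σ]
  apply Finset.sum_le_sum
  intro i hi
  simp only [Finset.mem_filter, Finset.mem_univ, true_and] at hi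
  exact fiber_max ha hi hσ hg

-- ### spatial characterization of Nm / NM

lemma close_sign {p q : ℝ} (h : |p - q| < |q|) : 0 < p * q := by
  rcases lt_trichotomy q 0 with hq | hq | hq
  · rw [abs_of_neg hq] at h
    have := abs_lt.1 h
    nlinarith
  · exfalso
    rw [hq] at h
    simp at h
    linarith [abs_nonneg p]
  · rw [abs_of_pos hq] at h
    have := abs_lt.1 h
    nlinarith

lemma exists_rho {a : Fin n → ℝ} (ha : a ≠ 0) :
    ∃ ρ > 0, ∀ i, a i ≠ 0 → ρ ≤ |a i| := by
  classical
  obtain ⟨j, hj⟩ := Function.ne_iff.1 ha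
  have hT : (Finset.univ.filter (fun i => a i ≠ 0)).Nonempty :=
    ⟨j, by simp only [Finset.mem_filter, Finset.mem_univ, true_and]; simpa using hj⟩
  refine ⟨(Finset.univ.filter (fun i => a i ≠ 0)).inf' hT (fun i => |a i|), ?_, ?_⟩
  · rw [gt_iff_lt, Finset.lt_inf'_iff]
    intro i hi
    simp only [Finset.mem_filter, Finset.mem_univ, true_and] at hi
    exact abs_pos.2 hi
  · intro i hi
    exact Finset.inf'_le _ (by simp only [Finset.mem_filter, Finset.mem_univ, true_and]; exact hi)

/-- the perturbed pattern point -/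
noncomputable def ptn (a : Fin n → ℝ) (S : Fin n → ℝ) (ε : ℝ) (i : Fin n) : ℝ :=
  if a i = 0 then ε * S i else a i

lemma ptn_sign {a S : Fin n → ℝ} (hS1 : ∀ i, S i * S i = 1)
    (hSa : ∀ i, a i ≠ 0 → 0 < a i * S i) {ε : ℝ} (hε : 0 < ε) (i : Fin n) :
    0 < ptn a S ε i * S i := by
  unfold ptn
  by_cases h : a i = 0
  · rw [if_pos h]
    have := hS1 i
    nlinarith
  · rw [if_neg h]
    exact hSa i h

lemma ptn_ne_zero {a S : Fin n → ℝ} (hS1 : ∀ i, S i * S i = 1)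
    (hSa : ∀ i, a i ≠ 0 → 0 < a i * S i) {ε : ℝ} (hε : 0 < ε) (i : Fin n) :
    ptn a S ε i ≠ 0 := by
  have := ptn_sign hS1 hSa hε i
  intro hc
  rw [hc] at this
  simp at this

lemma ptn_dist {a S : Fin n → ℝ} (hS1 : ∀ i, S i * S i = 1) {ε : ℝ} (hε : 0 < ε) :
    dist (ptn a S ε) a ≤ ε := by
  rw [dist_pi_le_iff hε.le]
  intro i
  unfold ptn
  by_cases h : a i = 0
  · rw [if_pos h, h, Real.dist_eq, sub_zero, abs_mul, abs_of_pos hε]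
    have : |S i| = 1 := by
      have := hS1 i
      rcases abs_cases (S i) with ⟨h1, _⟩ | ⟨h1, _⟩ <;> nlinarith
    rw [this, mul_one]
  · rw [if_neg h]
    simp [hε.le]

lemma freq_pattern {a S : Fin n → ℝ} (ha : a ≠ 0) (hS1 : ∀ i, S i * S i = 1)
    (hSa : ∀ i, a i ≠ 0 → 0 < a i * S i) :
    ∃ᶠ y in 𝓝[cyclicLambda n] a, cyclicN n y = cnt S := by
  rw [Filter.frequently_iff]
  intro U hU
  rw [Metric.mem_nhdsWithin_iff] at hU
  obtain ⟨ρ, hρ, hsub⟩ := hU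
  refine ⟨ptn a S (ρ/2), hsub ⟨?_, ?_⟩, ?_⟩
  · exact Metric.mem_ball.2 (lt_of_le_of_lt (ptn_dist hS1 (by linarith)) (by linarith))
  · exact fun i => ptn_ne_zero hS1 hSa (by linarith) i
  · rw [cyclicN_eq_cnt]
    exact cnt_congr (fun i => ptn_sign hS1 hSa (by linarith) i)

lemma Sp_agree {a : Fin n → ℝ} (ha : a ≠ 0) : ∀ i, a i ≠ 0 → 0 < a i * Sp a i := by
  intro i hi
  rw [Sp_of_ne ha hi]
  exact mul_sgn_pos hi

lemma Sm_agree {a : Fin n → ℝ} (ha : a ≠ 0) : ∀ i, a i ≠ 0 → 0 < a i * Sm a i := by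
  intro i hi
  rw [Sm_of_ne ha hi]
  exact mul_sgn_pos hi

lemma freq_bounds {a : Fin n → ℝ} (ha : a ≠ 0) {k : ℕ}
    (hk : ∃ᶠ y in 𝓝[cyclicLambda n] a, cyclicN n y = k) :
    cnt (Sp a) ≤ k ∧ k ≤ cnt (Sm a) := by
  obtain ⟨ρ, hρ, hbound⟩ := exists_rho ha
  have hU : Metric.ball a ρ ∩ cyclicLambda n ∈ 𝓝[cyclicLambda n] a :=
    Filter.inter_mem (mem_nhdsWithin_of_mem_nhds (Metric.ball_mem_nhds a hρ))
      self_mem_nhdsWithin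
  obtain ⟨y, ⟨hyb, hyl⟩, hyk⟩ := Filter.frequently_iff.1 hk hU
  have hyagree : ∀ i, a i ≠ 0 → 0 < y i * a i := by
    intro i hi
    apply close_sign
    calc |y i - a i| = dist (y i) (a i) := by rw [Real.dist_eq]
      _ ≤ dist y a := dist_le_pi_dist y a i
      _ < ρ := by rwa [Metric.mem_ball] at hyb
      _ ≤ |a i| := hbound i hi
  rw [← hyk, cyclicN_eq_cnt]
  exact ⟨cnt_min ha hyl hyagree, cnt_max ha hyl hyagree⟩

lemma Nm_eq {a : Fin n → ℝ} (ha : a ≠ 0) : cyclicNm n a = cnt (Sp a) := by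
  have hmem : cnt (Sp a) ∈ {k | ∃ᶠ y in 𝓝[cyclicLambda n] a, cyclicN n y = k} :=
    freq_pattern ha (Sp_sq a) (Sp_agree ha)
  apply le_antisymm
  · exact Nat.sInf_le hmem
  · exact le_csInf ⟨_, hmem⟩ (fun k hk => (freq_bounds ha hk).1)

lemma NM_eq {a : Fin n → ℝ} (ha : a ≠ 0) : cyclicNM n a = cnt (Sm a) := by
  have hmem : cnt (Sm a) ∈ {k | ∃ᶠ y in 𝓝[cyclicLambda n] a, cyclicN n y = k} :=
    freq_pattern ha (Sm_sq a) (Sm_agree ha)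
  have hbdd : BddAbove {k | ∃ᶠ y in 𝓝[cyclicLambda n] a, cyclicN n y = k} :=
    ⟨cnt (Sm a), fun k hk => (freq_bounds ha hk).2⟩
  apply le_antisymm
  · exact csSup_le ⟨_, hmem⟩ (fun k hk => (freq_bounds ha hk).2)
  · exact le_csSup hbdd hmem

lemma lambda_ne_zero {b : Fin n → ℝ} (hb : b ∈ cyclicLambda n) : b ≠ 0 := by
  intro hc
  exact hb 0 (by rw [hc]; rfl)

lemma cnt_Sp_lambda {b : Fin n → ℝ} (hb : b ∈ cyclicLambda n) : cnt (Sp b) = cnt b :=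
  cnt_congr (fun i => by
    rw [Sp_of_ne (lambda_ne_zero hb) (hb i), mul_comm]
    exact mul_sgn_pos (hb i))

lemma cnt_Sm_lambda {b : Fin n → ℝ} (hb : b ∈ cyclicLambda n) : cnt (Sm b) = cnt b :=
  cnt_congr (fun i => by
    rw [Sm_of_ne (lambda_ne_zero hb) (hb i), mul_comm]
    exact mul_sgn_pos (hb i))

lemma Nm_lambda {b : Fin n → ℝ} (hb : b ∈ cyclicLambda n) : cyclicNm n b = cnt b := by
  rw [Nm_eq (lambda_ne_zero hb), cnt_Sp_lambda hb]

lemma Nm_le_NM {a : Fin n → ℝ} (ha : a ≠ 0) : cnt (Sp a) ≤ cnt (Sm a) :=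
  cnt_min ha (Sm_all_ne a) (fun k hk => by
    rw [mul_comm]; exact Sm_agree ha k hk)

-- ### ODE part

lemma sub_delta_pos (S : LinCNF n) (s : ℝ) (i : Fin n) :
    0 < S.sub s i * cyclicDelta n i := by
  unfold cyclicDelta
  by_cases hi : i = 0
  · rw [if_pos hi, hi]
    have := S.sub_neg s
    nlinarith
  · rw [if_neg hi]
    have := S.sub_pos s i hi
    nlinarith

lemma sol_cont {S : LinCNF n} {x : ℝ → Fin n → ℝ} (hx : S.IsSolution x) (i : Fin n) :
    Continuous fun t => x t i := by
  rw [continuous_iff_continuousAt]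
  intro t
  exact (hx t i).continuousAt

lemma nonvanish {S : LinCNF n} {x : ℝ → Fin n → ℝ} (hx : S.IsSolution x)
    {T : ℝ} (hT : 0 ≤ T) (h0 : x 0 ≠ 0) : x T ≠ 0 := by
  by_contra hc
  set B : ℝ → ℝ := fun u => ∑ i : Fin n, (|S.diag u i| + |S.sub u i|) with hB
  have hBcont : Continuous B := by
    apply continuous_finset_sum
    intro i _
    exact ((S.cont_diag i).abs.add (S.cont_sub i).abs)
  obtain ⟨u₀, hu₀, hmax'⟩ := isCompact_Icc.exists_isMaxOn (α := ℝ) ⟨0, le_refl 0, hT⟩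
    hBcont.continuousOn
  have hmax : ∀ u ∈ Set.Icc (0:ℝ) T, B u ≤ B u₀ := fun u hu => hmax' hu
  set K : ℝ := max (B u₀) 0 with hK
  have hK0 : 0 ≤ K := le_max_right _ _
  set g : ℝ → (Fin n → ℝ) := fun s => x (T - s) with hg
  set g' : ℝ → (Fin n → ℝ) := fun s i =>
    -(S.diag (T - s) i * x (T - s) i + S.sub (T - s) i * x (T - s) (i - 1)) with hg'
  have hgd : ∀ s, HasDerivAt g (g' s) s := by
    intro s
    apply hasDerivAt_pi.2
    intro i
    have hinner : HasDerivAt (fun s : ℝ => T - s) (-1) s := by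
      simpa using (hasDerivAt_id s).const_sub T
    have houter := hx (T - s) i
    have := HasDerivAt.comp s houter hinner
    refine this.congr_deriv ?_
    simp [hg']
    try ring
  have hBb : ∀ u ∈ Set.Icc 0 T, ∀ z : Fin n → ℝ, ∀ i,
      |S.diag u i * z i + S.sub u i * z (i - 1)| ≤ K * ‖z‖ := by
    intro u hu z i
    have h1 : |S.diag u i * z i + S.sub u i * z (i - 1)|
        ≤ |S.diag u i| * ‖z‖ + |S.sub u i| * ‖z‖ := by
      calc |S.diag u i * z i + S.sub u i * z (i - 1)|
          ≤ |S.diag u i * z i| + |S.sub u i * z (i - 1)| := abs_add_le _ _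
        _ ≤ |S.diag u i| * ‖z‖ + |S.sub u i| * ‖z‖ := by
            rw [abs_mul, abs_mul]
            have hz1 : |z i| ≤ ‖z‖ := by
              have := norm_le_pi_norm z i
              simpa [Real.norm_eq_abs] using this
            have hz2 : |z (i - 1)| ≤ ‖z‖ := by
              have := norm_le_pi_norm z (i - 1)
              simpa [Real.norm_eq_abs] using this
            have := abs_nonneg (S.diag u i)
            have := abs_nonneg (S.sub u i)
            nlinarith
    have h2 : |S.diag u i| + |S.sub u i| ≤ B u := by
      apply Finset.single_le_sum (f := fun j => |S.diag u j| + |S.sub u j|)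
        (fun j _ => by positivity) (Finset.mem_univ i)
    have h3 : B u ≤ K := le_trans (hmax u hu) (le_max_left _ _)
    have hzn : 0 ≤ ‖z‖ := norm_nonneg z
    nlinarith
  have hgron := norm_le_gronwallBound_of_norm_deriv_right_le
    (f := g) (f' := g') (δ := 0) (K := K) (ε := 0) (a := 0) (b := T)
    (by
      apply Continuous.continuousOn
      apply continuous_pi
      intro i
      exact (sol_cont hx i).comp (continuous_const.sub continuous_id))
    (fun s _ => (hgd s).hasDerivWithinAt)
    (by simp [hg, hc])
    (by
      intro s hs
      rw [pi_norm_le_iff_of_nonneg (by positivity)]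
      intro i
      have hTs : T - s ∈ Set.Icc 0 T := by
        constructor <;> [linarith [hs.2]; linarith [hs.1]]
      have := hBb (T - s) hTs (g s) i
      simp only [hg', Real.norm_eq_abs, abs_neg]
      calc |S.diag (T - s) i * x (T - s) i + S.sub (T - s) i * x (T - s) (i - 1)|
          = |S.diag (T - s) i * g s i + S.sub (T - s) i * g s (i - 1)| := by rfl
        _ ≤ K * ‖g s‖ := hBb (T - s) hTs (g s) i
        _ ≤ K * ‖g s‖ + 0 := by linarith)
  have hend := hgron T ⟨le_refl 0 |>.trans hT, le_refl T⟩
  rw [sub_zero, gronwallBound_ε0_δ0] at hend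
  have : g T = 0 := by
    ext i
    have h1 : ‖g T‖ ≤ 0 := hend
    have h2 : ‖g T‖ = 0 := le_antisymm h1 (norm_nonneg _)
    have := norm_eq_zero.1 h2
    rw [this]
    try rfl
  apply h0
  have : x (T - T) = 0 := this
  rwa [sub_self] at this

-- ### the sign lemma

lemma sign_lemma {S : LinCNF n} {x : ℝ → Fin n → ℝ} (hx : S.IsSolution x)
    {t₀ : ℝ} (h0 : x t₀ ≠ 0) :
    ∃ ε > 0, ∀ i,
      (∀ t, t₀ < t → t < t₀ + ε → 0 < x t i * Sp (x t₀) i)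
      ∧ (∀ t, t₀ - ε < t → t < t₀ → 0 < x t i * Sm (x t₀) i) := by
  set a : Fin n → ℝ := x t₀ with haa
  have main : ∀ M : ℕ, ∃ ε > 0, ∀ i, mb a i ≤ M →
      (∀ t, t₀ < t → t < t₀ + ε → 0 < x t i * Sp a i)
      ∧ (∀ t, t₀ - ε < t → t < t₀ → 0 < x t i * Sm a i) := by
    intro M
    induction M with
    | zero =>
      have base : ∀ i : Fin n, ∃ e > 0, (a i ≠ 0 →
          ∀ t, t₀ - e < t → t < t₀ + e → 0 < x t i * sgn (a i)) := by
        intro i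
        by_cases hi : a i ≠ 0
        · have hpos : 0 < x t₀ i * sgn (a i) := mul_sgn_pos hi
          have hcont : Continuous (fun t => x t i * sgn (a i)) :=
            (sol_cont hx i).mul continuous_const
          have hev : ∀ᶠ t in 𝓝 t₀, 0 < x t i * sgn (a i) :=
            (hcont.continuousAt (x := t₀)).eventually (eventually_gt_nhds hpos)
          rw [Metric.eventually_nhds_iff] at hev
          obtain ⟨e, he, hball⟩ := hev
          refine ⟨e, he, fun _ t h1 h2 => hball ?_⟩
          rw [Real.dist_eq, abs_lt]
          constructor <;> linarith
        · exact ⟨1, one_pos, fun hc => absurd hc hi⟩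
      choose e he hbase using base
      have hne : (Finset.univ : Finset (Fin n)).Nonempty := Finset.univ_nonempty
      refine ⟨Finset.univ.inf' hne e, ?_, ?_⟩
      · rw [gt_iff_lt, Finset.lt_inf'_iff]
        exact fun i _ => he i
      · intro i hi
        have hmb0 : mb a i = 0 := Nat.le_zero.1 hi
        have hai : a i ≠ 0 := by
          have := mb_spec h0 i
          rwa [hmb0, Nat.cast_zero, sub_zero] at this
        have hinf : Finset.univ.inf' hne e ≤ e i := Finset.inf'_le _ (Finset.mem_univ i)
        constructor
        · intro t h1 h2
          rw [Sp_of_ne h0 hai]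
          exact hbase i hai t (by linarith) (by linarith)
        · intro t h1 h2
          rw [Sm_of_ne h0 hai]
          exact hbase i hai t (by linarith) (by linarith)
    | succ M ih =>
      obtain ⟨ε, hε, hI⟩ := ih
      refine ⟨ε, hε, ?_⟩
      intro i hi
      rcases Nat.lt_or_ge M (mb a i) with hgt | hle
      swap
      · exact hI i hle
      have hmb : mb a i = M + 1 := by omega
      have hai : a i = 0 := by
        by_contra hne
        rw [mb_eq_zero h0 hne] at hmb
        omega
      have hmb1 : mb a (i - 1) = M := by
        have := mb_rec h0 hai
        omega
      have hIH := hI (i - 1) (le_of_eq hmb1)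
      -- the integrating factor
      set I : ℝ → ℝ := fun s => ∫ r in t₀..s, S.diag r i with hII
      have hId : ∀ s : ℝ, HasDerivAt I (S.diag s i) s := fun s =>
        ((S.cont_diag i).integral_hasStrictDerivAt t₀ s).hasDerivAt
      set Y : ℝ → ℝ := fun s => x s i * Real.exp (-I s) with hYY
      have hYd : ∀ s : ℝ, HasDerivAt Y (Real.exp (-I s) * (S.sub s i * x s (i - 1))) s := by
        intro s
        have h2 : HasDerivAt (fun s => Real.exp (-I s)) (Real.exp (-I s) * (-(S.diag s i))) s := by
          have h3 := ((hId s).neg).exp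
          simpa using h3
        have h4 := (hx s i).mul h2
        refine h4.congr_deriv ?_
        ring
      have hYc : Continuous Y :=
        continuous_iff_continuousAt.2 (fun s => (hYd s).continuousAt)
      have hYt₀ : Y t₀ = 0 := by
        have : x t₀ i = 0 := hai
        simp [hYY, this]
      constructor
      · -- right side
        intro u hu1 hu2
        have hmono : StrictMonoOn (fun s => Y s * Sp a i) (Set.Icc t₀ u) := by
          apply strictMonoOn_of_deriv_pos (convex_Icc _ _)
            ((hYc.mul continuous_const).continuousOn)
          intro s hs
          rw [interior_Icc] at hs
          have hds : HasDerivAt (fun s => Y s * Sp a i)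
              (Real.exp (-I s) * (S.sub s i * x s (i - 1)) * Sp a i) s := (hYd s).mul_const _
          rw [show (Y * fun _ => Sp a i) = (fun s => Y s * Sp a i) from rfl, hds.deriv]
          have hxp : 0 < x s (i - 1) * Sp a (i - 1) :=
            hIH.1 s hs.1 (by linarith [hs.2])
          have hsd := sub_delta_pos S s i
          have hrw : Real.exp (-I s) * (S.sub s i * x s (i - 1)) * Sp a i
              = Real.exp (-I s) * ((S.sub s i * cyclicDelta n i) * (x s (i - 1) * Sp a (i - 1))) := by
            rw [Sp_rec h0 hai]
            ring
          rw [hrw]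
          exact mul_pos (Real.exp_pos _) (mul_pos hsd hxp)
        have hlt : Y t₀ * Sp a i < Y u * Sp a i :=
          hmono (Set.left_mem_Icc.2 hu1.le) (Set.right_mem_Icc.2 hu1.le) hu1
        rw [hYt₀] at hlt
        simp only [zero_mul] at hlt
        have : 0 < (x u i * Sp a i) * Real.exp (-I u) := by
          have : Y u * Sp a i = (x u i * Sp a i) * Real.exp (-I u) := by
            simp only [hYY]; ring
          linarith [this ▸ hlt]
        exact pos_of_mul_pos_right' this (Real.exp_pos _)
      · -- left side
        intro u hu1 hu2
        have hmono : StrictAntiOn (fun s => Y s * Sm a i) (Set.Icc u t₀) := by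
          apply strictAntiOn_of_deriv_neg (convex_Icc _ _)
            ((hYc.mul continuous_const).continuousOn)
          intro s hs
          rw [interior_Icc] at hs
          have hds : HasDerivAt (fun s => Y s * Sm a i)
              (Real.exp (-I s) * (S.sub s i * x s (i - 1)) * Sm a i) s := (hYd s).mul_const _
          rw [show (Y * fun _ => Sm a i) = (fun s => Y s * Sm a i) from rfl, hds.deriv]
          have hxp : 0 < x s (i - 1) * Sm a (i - 1) :=
            hIH.2 s (by linarith [hs.1]) hs.2
          have hsd := sub_delta_pos S s i
          have hrw : Real.exp (-I s) * (S.sub s i * x s (i - 1)) * Sm a i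
              = -(Real.exp (-I s) * ((S.sub s i * cyclicDelta n i) * (x s (i - 1) * Sm a (i - 1)))) := by
            rw [Sm_rec h0 hai]
            ring
          rw [hrw]
          have := mul_pos (Real.exp_pos (-I s)) (mul_pos hsd hxp)
          linarith
        have hlt : Y u * Sm a i > Y t₀ * Sm a i :=
          hmono (Set.left_mem_Icc.2 hu2.le) (Set.right_mem_Icc.2 hu2.le) hu2
        rw [hYt₀] at hlt
        simp only [zero_mul] at hlt
        have hpos : 0 < (x u i * Sm a i) * Real.exp (-I u) := by
          have heq : Y u * Sm a i = (x u i * Sm a i) * Real.exp (-I u) := by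
            simp only [hYY]; ring
          linarith [heq ▸ hlt]
        exact pos_of_mul_pos_right' hpos (Real.exp_pos _)
  obtain ⟨ε, hε, hmain⟩ := main n
  exact ⟨ε, hε, fun i => hmain i (le_of_lt (mb_lt_n h0 i))⟩

-- ### monotonicity of Nm along solutions

lemma lambda_of_sign {b τ : Fin n → ℝ} (hs : ∀ i, 0 < b i * τ i) : b ∈ cyclicLambda n := by
  intro i hz
  have := hs i
  rw [hz] at this
  simp at this

lemma mono_Nm {S : LinCNF n} {x : ℝ → Fin n → ℝ} (hx : S.IsSolution x)
    (h0 : x 0 ≠ 0) {v : ℝ} (hv : 0 ≤ v) :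
    cyclicNm n (x v) ≤ cyclicNm n (x 0) := by
  rcases eq_or_lt_of_le hv with hv0 | hvpos
  · rw [← hv0]
  set B : Set ℝ := {w | w ∈ Set.Icc 0 v ∧ cyclicNm n (x w) ≤ cyclicNm n (x 0)} with hBdef
  have hB0 : (0:ℝ) ∈ B := ⟨⟨le_refl 0, hv⟩, le_refl _⟩
  have hBne : B.Nonempty := ⟨0, hB0⟩
  have hBbdd : BddAbove B := ⟨v, fun w hw => hw.1.2⟩
  set c := sSup B with hc
  have hc0 : 0 ≤ c := le_csSup hBbdd hB0
  have hcv : c ≤ v := csSup_le hBne (fun w hw => hw.1.2)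
  have hxc : x c ≠ 0 := nonvanish hx hc0 h0
  obtain ⟨ε, hε, hsg⟩ := sign_lemma hx hxc
  have hcB : c ∈ B := by
    by_contra hcB
    have hcne : c ≠ 0 := fun h => hcB (h ▸ hB0)
    have hcpos : 0 < c := lt_of_le_of_ne hc0 (Ne.symm hcne)
    have hlt : c - min ε c < c := by
      have : 0 < min ε c := lt_min hε hcpos
      linarith
    obtain ⟨w, hwB, hw⟩ := exists_lt_of_lt_csSup hBne hlt
    have hwle : w ≤ c := le_csSup hBbdd hwB
    have hwlt : w < c := lt_of_le_of_ne hwle (fun h => hcB (h ▸ hwB))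
    have hsgn : ∀ i, 0 < x w i * Sm (x c) i := fun i =>
      (hsg i).2 w (by have : min ε c ≤ ε := min_le_left _ _; linarith) hwlt
    have hwl : x w ∈ cyclicLambda n := lambda_of_sign hsgn
    have h1 : cyclicNm n (x c) ≤ cyclicNm n (x w) := by
      rw [Nm_lambda hwl, Nm_eq hxc]
      calc cnt (Sp (x c)) ≤ cnt (Sm (x c)) := Nm_le_NM hxc
        _ = cnt (x w) := (cnt_congr hsgn).symm
    exact hcB ⟨⟨hc0, hcv⟩, le_trans h1 hwB.2⟩
  rcases eq_or_lt_of_le hcv with he | hclt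
  · rw [← he]; exact hcB.2
  · exfalso
    set w := min (c + ε/2) ((c + v)/2) with hwdef
    have hw1 : c < w := lt_min (by linarith) (by linarith)
    have hw2 : w < c + ε := lt_of_le_of_lt (min_le_left _ _) (by linarith)
    have hwv : w ≤ v := le_trans (min_le_right _ _) (by linarith)
    have hsgn : ∀ i, 0 < x w i * Sp (x c) i := fun i => (hsg i).1 w hw1 hw2
    have hwl : x w ∈ cyclicLambda n := lambda_of_sign hsgn
    have heq : cyclicNm n (x w) = cyclicNm n (x c) := by
      rw [Nm_lambda hwl, Nm_eq hxc]
      exact cnt_congr hsgn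
    have hwB : w ∈ B := ⟨⟨by linarith, hwv⟩, by rw [heq]; exact hcB.2⟩
    have := le_csSup hBbdd hwB
    rw [← hc] at this
    linarith

-- ### closure bound

lemma closure_bound {x₀ : Fin n → ℝ} {m : ℕ}
    (hcl : x₀ ∈ closure ({0} ∪ {y : Fin n → ℝ | cyclicNM n y ≤ m}))
    (hx0 : x₀ ≠ 0) : cyclicNm n x₀ ≤ m := by
  obtain ⟨ρ₀, hρ₀, hb⟩ := exists_rho hx0
  have hnx : 0 < ‖x₀‖ := norm_pos_iff.2 hx0
  set ρ : ℝ := min ρ₀ ‖x₀‖ / 4 with hρdef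
  have hρ : 0 < ρ := by
    have := lt_min hρ₀ hnx
    simp only [hρdef]
    positivity
  rw [Metric.mem_closure_iff] at hcl
  obtain ⟨z, hzK, hzd⟩ := hcl ρ hρ
  have hzne : z ≠ 0 := by
    intro hz
    rw [hz, dist_zero_right] at hzd
    have h1 : ρ ≤ ‖x₀‖ / 4 := by
      simp only [hρdef]
      have := min_le_right ρ₀ ‖x₀‖
      linarith
    linarith
  have hzNM : cyclicNM n z ≤ m := by
    rcases hzK with hz0 | hzm
    · exact absurd hz0 hzne
    · exact hzm
  set y := ptn z (Sp z) ρ with hydef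
  have hyl : ∀ i, y i ≠ 0 := fun i => ptn_ne_zero (Sp_sq z) (Sp_agree hzne) hρ i
  have hysign : ∀ i, 0 < y i * Sp z i := fun i => ptn_sign (Sp_sq z) (Sp_agree hzne) hρ i
  have hyd : dist y z ≤ ρ := ptn_dist (Sp_sq z) hρ
  have hagree : ∀ i, x₀ i ≠ 0 → 0 < y i * x₀ i := by
    intro i hi
    apply close_sign
    have h1 : dist (y i) (x₀ i) ≤ dist y x₀ := dist_le_pi_dist y x₀ i
    have h2 : dist y x₀ ≤ dist y z + dist z x₀ := dist_triangle y z x₀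
    have h3 : dist z x₀ < ρ := by rwa [dist_comm] at hzd
    have h4 : 2 * ρ < ρ₀ := by
      have := min_le_left ρ₀ ‖x₀‖
      simp only [hρdef]
      linarith
    have h5 : ρ₀ ≤ |x₀ i| := hb i hi
    calc |y i - x₀ i| = dist (y i) (x₀ i) := by rw [Real.dist_eq]
      _ < |x₀ i| := by linarith
  calc cyclicNm n x₀ = cnt (Sp x₀) := Nm_eq hx0
    _ ≤ cnt y := cnt_min hx0 hyl hagree
    _ = cnt (Sp z) := cnt_congr hysign
    _ ≤ cnt (Sm z) := Nm_le_NM hzne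
    _ = cyclicNM n z := (NM_eq hzne).symm
    _ ≤ m := hzNM
end S5

/-- For `t > 0`, the fundamental solution operator maps
`K̄_h \ {0}` into `Int K̄_h = K_h \ {0}`. -/
theorem stmt5 (n : ℕ) [NeZero n] (hn : 2 ≤ n) (S : LinCNF n)
    (Φ : ℝ → (Fin n → ℝ) →ₗ[ℝ] (Fin n → ℝ)) (hΦ : S.IsFundamental Φ)
    (h : ℕ) (h1 : 1 ≤ h) (h2 : h ≤ (ntilde n + 1) / 2) :
    ∀ x₀ ∈ closure (Kcone n h), x₀ ≠ 0 → ∀ t : ℝ, 0 < t →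
      Φ t x₀ ≠ 0 ∧ cyclicNM n (Φ t x₀) ≤ 2 * h - 1 := by
  intro x₀ hcl hx0 t ht
  set x : ℝ → Fin n → ℝ := fun s => Φ s x₀ with hxdef
  have hxsol : S.IsSolution x := hΦ.2 x₀
  have hx00 : x 0 = x₀ := by
    simp only [hxdef, hΦ.1, LinearMap.id_coe, id_eq]
  have hx0ne : x 0 ≠ 0 := by rw [hx00]; exact hx0
  have hxt : x t ≠ 0 := S5.nonvanish hxsol ht.le hx0ne
  refine ⟨hxt, ?_⟩
  obtain ⟨ε, hε, hsg⟩ := S5.sign_lemma hxsol hxt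
  set v : ℝ := max (t - ε/2) (t/2) with hvdef
  have hv1 : t - ε < v := lt_of_lt_of_le (by linarith) (le_max_left _ _)
  have hv2 : v < t := max_lt (by linarith) (by linarith)
  have hv0 : 0 < v := lt_of_lt_of_le (by linarith) (le_max_right _ _)
  have hsgn : ∀ i, 0 < x v i * S5.Sm (x t) i := fun i => (hsg i).2 v hv1 hv2
  have hvl : x v ∈ cyclicLambda n := S5.lambda_of_sign hsgn
  have hcb : cyclicNm n x₀ ≤ 2 * h - 1 := S5.closure_bound hcl hx0
  calc cyclicNM n (x t) = S5.cnt (S5.Sm (x t)) := S5.NM_eq hxt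
    _ = S5.cnt (x v) := (S5.cnt_congr hsgn).symm
    _ = cyclicNm n (x v) := (S5.Nm_lambda hvl).symm
    _ ≤ cyclicNm n (x 0) := S5.mono_Nm hxsol hx0ne hv0.le
    _ = cyclicNm n x₀ := by rw [hx00]
    _ ≤ 2 * h - 1 := hcb
end

section
/- Let Φ(t) be the fundamental matrix solution of the linear cyclic negative feedback system with Φ(0) = I, let 1 ≤ h ≤ (ñ+1)/2, and let Σ₀ ⊂ K_h be a linear subspace of ℝⁿ. For t ∈ ℝ let Σ_t = Φ(t)(Σ₀). Then dim Σ_t = dim Σ₀ for all t ∈ ℝ, and Σ_t ⊂ K_h for all t ≥ 0. -/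
open Filter Topology

set_option linter.unusedSectionVars false
open Fin.NatCast


section aux
variable {n : ℕ} [NeZero n]

lemma cyclicDelta_cases (i : Fin n) : cyclicDelta n i = 1 ∨ cyclicDelta n i = -1 := by
  unfold cyclicDelta; split <;> simp

lemma lam_mem_nhds {y : Fin n → ℝ} (hy : y ∈ cyclicLambda n) : cyclicLambda n ∈ 𝓝 y := by
  have : IsOpen (cyclicLambda n) := by
    have : cyclicLambda n = ⋂ i, {x : Fin n → ℝ | x i ≠ 0} := by
      ext x; simp [cyclicLambda]
    rw [this]
    exact isOpen_iInter_of_finite fun i =>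
      (isClosed_eq (continuous_apply i) continuous_const).isOpen_compl
  exact this.mem_nhds hy

noncomputable def NFin (n : ℕ) [NeZero n] (y : Fin n → ℝ) : Finset (Fin n) :=
  Finset.univ.filter fun i => cyclicDelta n i * y i * y (i - 1) < 0

lemma cyclicN_eq_card (y : Fin n → ℝ) : cyclicN n y = (NFin n y).card := by
  classical
  rw [cyclicN, Nat.card_eq_fintype_card, NFin, Fintype.card_subtype]

lemma cyclicN_le (y : Fin n → ℝ) : cyclicN n y ≤ n := by
  rw [cyclicN_eq_card]
  calc (NFin n y).card ≤ Finset.univ.card := Finset.card_le_card (Finset.filter_subset _ _)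
  _ = n := by simp

lemma sign_transfer {d a b a' b' : ℝ} (hd : d = 1 ∨ d = -1) (ha : a * a' > 0) (hb : b * b' > 0) :
    d * a * b < 0 ↔ d * a' * b' < 0 := by
  rcases hd with h | h <;> subst h <;>
    constructor <;> intro hlt <;> nlinarith

lemma cyclicN_congr {y w : Fin n → ℝ} (h : ∀ i, y i * w i > 0) : cyclicN n y = cyclicN n w := by
  rw [cyclicN_eq_card, cyclicN_eq_card]
  congr 1
  unfold NFin
  apply Finset.filter_congr
  intro i _
  simpa using sign_transfer (cyclicDelta_cases i) (h i) (h (i-1))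
end aux

section aux2
variable {n : ℕ} [NeZero n]

lemma freqSet_bdd (x : Fin n → ℝ) :
    BddAbove {k | ∃ᶠ y in 𝓝[cyclicLambda n] x, cyclicN n y = k} := by
  refine ⟨n, fun k hk => ?_⟩
  obtain ⟨y, hy⟩ := hk.exists
  exact hy ▸ cyclicN_le y

lemma le_cyclicNM_of_tendsto {α : Type*} {l : Filter α} [l.NeBot] {φ : α → Fin n → ℝ}
    {x : Fin n → ℝ} (h : Tendsto φ l (𝓝[cyclicLambda n] x)) {k : ℕ}
    (hk : ∀ᶠ a in l, cyclicN n (φ a) = k) : k ≤ cyclicNM n x :=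
  le_csSup (freqSet_bdd x) (h.frequently hk.frequently)

lemma cyclicNM_le_of_eventually {x : Fin n → ℝ} {m : ℕ}
    (h : ∀ᶠ y in 𝓝[cyclicLambda n] x, cyclicN n y ≤ m) : cyclicNM n x ≤ m := by
  apply csSup_le'
  rintro k hk
  obtain ⟨y, hy1, hy2⟩ := (hk.and_eventually h).exists
  exact hy1 ▸ hy2

lemma eventually_sign_match (x : Fin n → ℝ) :
    ∀ᶠ y in 𝓝 x, ∀ i, x i ≠ 0 → y i * x i > 0 := by
  have hopen : IsOpen {y : Fin n → ℝ | ∀ i, x i ≠ 0 → y i * x i > 0} := by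
    have : {y : Fin n → ℝ | ∀ i, x i ≠ 0 → y i * x i > 0} =
        ⋂ i, {y : Fin n → ℝ | x i ≠ 0 → y i * x i > 0} := by ext y; simp [Set.mem_iInter]
    rw [this]
    refine isOpen_iInter_of_finite fun i => ?_
    by_cases hx : x i = 0
    · simp [hx]
    · have : {y : Fin n → ℝ | x i ≠ 0 → y i * x i > 0} = {y | y i * x i > 0} := by
        ext y; simp [hx]
      rw [this]
      exact isOpen_lt continuous_const ((continuous_apply i).mul continuous_const)
  exact hopen.mem_nhds (fun i hi => mul_self_pos.mpr hi)

lemma cyclicNM_of_lam {y : Fin n → ℝ} (hy : y ∈ cyclicLambda n) :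
    cyclicNM n y = cyclicN n y := by
  have heq : ∀ᶠ w in 𝓝[cyclicLambda n] y, cyclicN n w = cyclicN n y := by
    apply eventually_nhdsWithin_of_eventually_nhds
    filter_upwards [eventually_sign_match y] with w hw
    exact cyclicN_congr fun i => hw i (hy i)
  have hne : (𝓝[cyclicLambda n] y).NeBot := by
    rw [nhdsWithin_eq_nhds.2 (lam_mem_nhds hy)]; infer_instance
  have h1 : {k | ∃ᶠ w in 𝓝[cyclicLambda n] y, cyclicN n w = k} = {cyclicN n y} := by
    ext k
    constructor
    · intro hk
      obtain ⟨w, hw1, hw2⟩ := (hk.and_eventually heq).exists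
      exact (hw1 ▸ hw2).symm ▸ rfl
    · rintro rfl
      exact heq.frequently
  rw [cyclicNM, h1, csSup_singleton]
end aux2

section uniq
variable {n : ℕ} [NeZero n]

lemma sol_vector_deriv {S : LinCNF n} {x : ℝ → Fin n → ℝ} (hx : S.IsSolution x) (t : ℝ) :
    HasDerivAt x (fun i => S.diag t i * x t i + S.sub t i * x t (i - 1)) t :=
  hasDerivAt_pi.2 fun i => hx t i

lemma sol_continuous {S : LinCNF n} {x : ℝ → Fin n → ℝ} (hx : S.IsSolution x) :
    Continuous x := by
  have : Differentiable ℝ x := fun t => (sol_vector_deriv hx t).differentiableAt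
  exact this.continuous

/-- Backward and forward uniqueness: a solution vanishing somewhere vanishes everywhere. -/
lemma sol_eq_zero {S : LinCNF n} {x : ℝ → Fin n → ℝ} (hx : S.IsSolution x)
    {t₁ : ℝ} (h1 : x t₁ = 0) (t₂ : ℝ) : x t₂ = 0 := by
  set a : ℝ := min t₁ t₂ - 1 with ha
  set b : ℝ := max t₁ t₂ + 1 with hb
  have hab : a < b := by
    have := min_le_max (a := t₁) (b := t₂); simp only [ha, hb]; linarith
  have ht₁ : t₁ ∈ Set.Ioo a b := by
    constructor
    · have := min_le_left t₁ t₂; simp only [ha]; linarith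
    · have := le_max_left t₁ t₂; simp only [hb]; linarith
  have ht₂ : t₂ ∈ Set.Icc a b := by
    constructor
    · have := min_le_right t₁ t₂; simp only [ha]; linarith
    · have := le_max_right t₁ t₂; simp only [hb]; linarith
  -- the clamped vector field
  set pr : ℝ → ℝ := fun t => max a (min t b) with hpr
  have hprmem : ∀ t, pr t ∈ Set.Icc a b := fun t =>
    ⟨le_max_left _ _, max_le (by linarith [min_le_right t b]) (min_le_right t b)⟩
  have hpr_eq : ∀ t ∈ Set.Ioo a b, pr t = t := by
    intro t ht
    simp only [hpr]
    rw [min_eq_left ht.2.le, max_eq_right ht.1.le]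
  set v : ℝ → (Fin n → ℝ) → (Fin n → ℝ) :=
    fun t w => fun i => S.diag (pr t) i * w i + S.sub (pr t) i * w (i - 1) with hv
  -- Lipschitz bound
  have hbound : ∀ i : Fin n, ∃ C : ℝ, ∀ τ ∈ Set.Icc a b, |S.diag τ i| + |S.sub τ i| ≤ C := by
    intro i
    obtain ⟨C, hC⟩ := (isCompact_Icc (a := a) (b := b)).exists_bound_of_continuousOn
      (((S.cont_diag i).abs.add (S.cont_sub i).abs)).continuousOn
    exact ⟨C, fun τ hτ => (le_abs_self _).trans ((Real.norm_eq_abs _ ▸ hC τ hτ))⟩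
  choose C hC using hbound
  have hFne : (Finset.univ : Finset (Fin n)).Nonempty := Finset.univ_nonempty
  set K₀ : ℝ := Finset.univ.sup' hFne C with hK₀
  have hK₀le : ∀ i, C i ≤ K₀ := fun i => Finset.le_sup' C (Finset.mem_univ i)
  set K : NNReal := Real.toNNReal K₀ with hK
  have hKge : ∀ i, ∀ τ ∈ Set.Icc a b, |S.diag τ i| + |S.sub τ i| ≤ (K : ℝ) := by
    intro i τ hτ
    calc |S.diag τ i| + |S.sub τ i| ≤ C i := hC i τ hτ
    _ ≤ K₀ := hK₀le i
    _ ≤ (K : ℝ) := Real.le_coe_toNNReal K₀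
  have hlip : ∀ t, LipschitzWith K (v t) := by
    intro t
    apply LipschitzWith.of_dist_le_mul
    intro w w'
    rw [dist_pi_le_iff (by positivity)]
    intro i
    have h1' : dist (w i) (w' i) ≤ dist w w' := dist_le_pi_dist w w' i
    have h2' : dist (w (i-1)) (w' (i-1)) ≤ dist w w' := dist_le_pi_dist w w' (i-1)
    have hKt := hKge i (pr t) (hprmem t)
    simp only [Real.dist_eq] at h1' h2' ⊢
    have : v t w i - v t w' i
        = S.diag (pr t) i * (w i - w' i) + S.sub (pr t) i * (w (i-1) - w' (i-1)) := by
      simp only [hv]; ring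
    calc |v t w i - v t w' i|
        ≤ |S.diag (pr t) i| * |w i - w' i| + |S.sub (pr t) i| * |w (i-1) - w' (i-1)| := by
          rw [this]; exact (abs_add_le _ _).trans (by rw [abs_mul, abs_mul])
      _ ≤ |S.diag (pr t) i| * dist w w' + |S.sub (pr t) i| * dist w w' := by
          exact add_le_add (mul_le_mul_of_nonneg_left h1' (abs_nonneg _))
            (mul_le_mul_of_nonneg_left h2' (abs_nonneg _))
      _ = (|S.diag (pr t) i| + |S.sub (pr t) i|) * dist w w' := by ring
      _ ≤ (K : ℝ) * dist w w' := by have hd : (0:ℝ) ≤ dist w w' := dist_nonneg; nlinarith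
  have hsol : Set.EqOn x (fun _ => (0 : Fin n → ℝ)) (Set.Icc a b) := by
    apply ODE_solution_unique_of_mem_Icc (v := v) (s := fun _ => Set.univ)
      (fun t _ => (hlip t).lipschitzOnWith) ht₁
    · exact (sol_continuous hx).continuousOn
    · intro t ht
      have := sol_vector_deriv hx t
      refine this.congr_deriv ?_
      funext i
      simp only [hv, hpr_eq t ht]
    · intro t _; trivial
    · exact continuousOn_const
    · intro t ht
      have : v t (0 : Fin n → ℝ) = 0 := by
        funext i; simp [hv]
      rw [this]
      exact hasDerivAt_const t 0
    · intro t _; trivial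
    · simpa using h1
  simpa using hsol ht₂
end uniq

section depth
variable {n : ℕ} [NeZero n]

lemma dpt_exists (z : Fin n → ℝ) (hz : ∃ j, z j ≠ 0) (i : Fin n) :
    ∃ k : ℕ, z (i - (k : Fin n)) ≠ 0 := by
  obtain ⟨j, hj⟩ := hz
  refine ⟨(i - j).val, ?_⟩
  rwa [Fin.cast_val_eq_self, sub_sub_cancel]

noncomputable def dpt (z : Fin n → ℝ) (hz : ∃ j, z j ≠ 0) (i : Fin n) : ℕ :=
  Nat.find (dpt_exists z hz i)

lemma dpt_spec (z : Fin n → ℝ) (hz : ∃ j, z j ≠ 0) (i : Fin n) :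
    z (i - ((dpt z hz i : ℕ) : Fin n)) ≠ 0 := Nat.find_spec (dpt_exists z hz i)

lemma dpt_min (z : Fin n → ℝ) (hz : ∃ j, z j ≠ 0) (i : Fin n) {k : ℕ}
    (hk : k < dpt z hz i) : z (i - (k : Fin n)) = 0 := by
  have := Nat.find_min (dpt_exists z hz i) hk
  simpa using this

lemma dpt_eq_zero (z : Fin n → ℝ) (hz : ∃ j, z j ≠ 0) {i : Fin n} (hi : z i ≠ 0) :
    dpt z hz i = 0 := by
  rw [dpt, Nat.find_eq_zero]
  simpa using hi

lemma dpt_succ (z : Fin n → ℝ) (hz : ∃ j, z j ≠ 0) {i : Fin n} (hi : z i = 0) :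
    dpt z hz i = dpt z hz (i - 1) + 1 := by
  have hshift : ∀ k : ℕ, i - ((k + 1 : ℕ) : Fin n) = (i - 1) - (k : Fin n) := by
    intro k
    have : ((k + 1 : ℕ) : Fin n) = (k : Fin n) + 1 := by push_cast; ring
    rw [this]; abel
  rw [dpt, Nat.find_eq_iff]
  constructor
  · have := dpt_spec z hz (i - 1)
    rwa [← hshift] at this
  · intro k hk
    simp only [ne_eq, not_not]
    rcases Nat.eq_zero_or_pos k with rfl | hkpos
    · simpa using hi
    · obtain ⟨k', rfl⟩ := Nat.exists_eq_succ_of_ne_zero hkpos.ne'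
      rw [hshift]
      exact dpt_min z hz (i - 1) (by omega)
end depth

section signdyn
variable {n : ℕ} [NeZero n]

lemma sub_mul_sub_pos (S : LinCNF n) (t t' : ℝ) (i : Fin n) :
    0 < S.sub t i * S.sub t' i := by
  by_cases h : i = 0
  · subst h; exact mul_pos_of_neg_of_neg (S.sub_neg t) (S.sub_neg t')
  · exact mul_pos (S.sub_pos t i h) (S.sub_pos t' i h)

lemma delta_mul_sub_pos (S : LinCNF n) (t : ℝ) (i : Fin n) :
    0 < cyclicDelta n i * S.sub t i := by
  by_cases h : i = 0
  · subst h
    have hd : cyclicDelta n 0 = -1 := by simp [cyclicDelta]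
    rw [hd]; nlinarith [S.sub_neg t]
  · simp only [cyclicDelta, if_neg h, one_mul]
    exact S.sub_pos t i h

/-- integrating-factor derivative computation -/
lemma factor_deriv {S : LinCNF n} {x : ℝ → Fin n → ℝ} (hx : S.IsSolution x) (i : Fin n)
    (t₀ : ℝ) (u : ℝ) :
    HasDerivAt (fun s => Real.exp (-(∫ r in t₀..s, S.diag r i)) * x s i)
      (Real.exp (-(∫ r in t₀..u, S.diag r i)) * (S.sub u i * x u (i - 1))) u := by
  have hA : HasDerivAt (fun s => ∫ r in t₀..s, S.diag r i) (S.diag u i) u :=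
    intervalIntegral.integral_hasDerivAt_right ((S.cont_diag i).intervalIntegrable _ _)
      ((S.cont_diag i).stronglyMeasurableAtFilter _ _) (S.cont_diag i).continuousAt
  have hE : HasDerivAt (fun s => Real.exp (-(∫ r in t₀..s, S.diag r i)))
      (Real.exp (-(∫ r in t₀..u, S.diag r i)) * (-(S.diag u i))) u := hA.neg.exp
  have := hE.mul (hx u i)
  exact this.congr_deriv (by ring)

lemma sign_right {S : LinCNF n} {x : ℝ → Fin n → ℝ} (hx : S.IsSolution x)
    {t₀ t₁ : ℝ} {i : Fin n} {c : ℝ} (h0 : x t₀ i = 0)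
    (hc : ∀ t ∈ Set.Ioo t₀ t₁, c * x t (i - 1) > 0) :
    ∀ t ∈ Set.Ioo t₀ t₁, (S.sub t₀ i * c) * x t i > 0 := by
  rcases le_or_gt t₁ t₀ with hle | hlt
  · intro t ht; exfalso; have := ht.1; have := ht.2; linarith
  set A : ℝ → ℝ := fun s => ∫ r in t₀..s, S.diag r i with hAdef
  set G : ℝ → ℝ := fun s => (S.sub t₀ i * c) * (Real.exp (-A s) * x s i) with hGdef
  have hG : ∀ u, HasDerivAt G
      ((S.sub t₀ i * c) * (Real.exp (-A u) * (S.sub u i * x u (i - 1)))) u :=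
    fun u => (factor_deriv hx i t₀ u).const_mul _
  have hmono : StrictMonoOn G (Set.Icc t₀ t₁) := by
    apply strictMonoOn_of_deriv_pos (convex_Icc t₀ t₁)
    · exact fun u _ => (hG u).differentiableAt.continuousAt.continuousWithinAt
    · intro u hu
      rw [interior_Icc] at hu
      rw [(hG u).deriv]
      have h1 := Real.exp_pos (-A u)
      have h2 := sub_mul_sub_pos S t₀ u i
      have h3 := hc u hu
      nlinarith [mul_pos h1 (mul_pos h2 h3)]
  intro t ht
  have hG0 : G t₀ = 0 := by simp [hGdef, h0]
  have : G t₀ < G t := hmono (Set.mem_Icc.2 ⟨le_refl t₀, hlt.le⟩)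
    (Set.mem_Icc.2 ⟨ht.1.le, ht.2.le⟩) ht.1
  rw [hG0] at this
  have hE := Real.exp_pos (-A t)
  have hGt : (S.sub t₀ i * c) * (Real.exp (-A t) * x t i) > 0 := this
  have hrw : (S.sub t₀ i * c) * x t i
      = Real.exp (A t) * ((S.sub t₀ i * c) * (Real.exp (-A t) * x t i)) := by
    rw [Real.exp_neg]; field_simp
  rw [hrw]
  exact mul_pos (Real.exp_pos _) hGt

lemma sign_left {S : LinCNF n} {x : ℝ → Fin n → ℝ} (hx : S.IsSolution x)
    {t₀ t₁ : ℝ} {i : Fin n} {c : ℝ} (h0 : x t₀ i = 0)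
    (hc : ∀ t ∈ Set.Ioo t₁ t₀, c * x t (i - 1) > 0) :
    ∀ t ∈ Set.Ioo t₁ t₀, (-(S.sub t₀ i) * c) * x t i > 0 := by
  rcases le_or_gt t₀ t₁ with hle | hlt
  · intro t ht; exfalso; have := ht.1; have := ht.2; linarith
  set A : ℝ → ℝ := fun s => ∫ r in t₀..s, S.diag r i with hAdef
  set G : ℝ → ℝ := fun s => (S.sub t₀ i * c) * (Real.exp (-A s) * x s i) with hGdef
  have hG : ∀ u, HasDerivAt G
      ((S.sub t₀ i * c) * (Real.exp (-A u) * (S.sub u i * x u (i - 1)))) u :=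
    fun u => (factor_deriv hx i t₀ u).const_mul _
  have hmono : StrictMonoOn G (Set.Icc t₁ t₀) := by
    apply strictMonoOn_of_deriv_pos (convex_Icc t₁ t₀)
    · exact fun u _ => (hG u).differentiableAt.continuousAt.continuousWithinAt
    · intro u hu
      rw [interior_Icc] at hu
      rw [(hG u).deriv]
      have h1 := Real.exp_pos (-A u)
      have h2 := sub_mul_sub_pos S t₀ u i
      have h3 := hc u hu
      nlinarith [mul_pos h1 (mul_pos h2 h3)]
  intro t ht
  have hG0 : G t₀ = 0 := by simp [hGdef, h0]
  have : G t < G t₀ := hmono (Set.mem_Icc.2 ⟨ht.1.le, ht.2.le⟩)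
    (Set.mem_Icc.2 ⟨hlt.le, le_refl t₀⟩) ht.2
  rw [hG0] at this
  have hE := Real.exp_pos (-A t)
  have hGt : (S.sub t₀ i * c) * (Real.exp (-A t) * x t i) < 0 := this
  have hrw : (-(S.sub t₀ i) * c) * x t i
      = Real.exp (A t) * (-((S.sub t₀ i * c) * (Real.exp (-A t) * x t i))) := by
    rw [Real.exp_neg]; field_simp
  rw [hrw]
  exact mul_pos (Real.exp_pos _) (neg_pos.2 hGt)
end signdyn

section traj
variable {n : ℕ} [NeZero n]

noncomputable def cAux (S : LinCNF n) (z : Fin n → ℝ) (t₀ : ℝ) (sgn : ℝ) : ℕ → Fin n → ℝ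
  | 0, i => z i
  | (m+1), i => if z i = 0 then sgn * S.sub t₀ i * cAux S z t₀ sgn m (i-1) else z i

noncomputable def cVec (S : LinCNF n) (z : Fin n → ℝ) (hz : ∃ j, z j ≠ 0) (t₀ : ℝ)
    (sgn : ℝ) (i : Fin n) : ℝ :=
  cAux S z t₀ sgn (dpt z hz i) i

lemma cVec_of_ne {S : LinCNF n} {z : Fin n → ℝ} {hz : ∃ j, z j ≠ 0} {t₀ sgn : ℝ}
    {i : Fin n} (hi : z i ≠ 0) : cVec S z hz t₀ sgn i = z i := by
  rw [cVec, dpt_eq_zero z hz hi]; rfl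

lemma cVec_of_eq {S : LinCNF n} {z : Fin n → ℝ} {hz : ∃ j, z j ≠ 0} {t₀ sgn : ℝ}
    {i : Fin n} (hi : z i = 0) :
    cVec S z hz t₀ sgn i = sgn * S.sub t₀ i * cVec S z hz t₀ sgn (i - 1) := by
  rw [cVec, dpt_succ z hz hi]
  simp only [cAux, if_pos hi, cVec]

lemma cVec_ne_zero {S : LinCNF n} {z : Fin n → ℝ} {hz : ∃ j, z j ≠ 0} {t₀ sgn : ℝ}
    (hsgn : sgn ≠ 0) (i : Fin n) : cVec S z hz t₀ sgn i ≠ 0 := by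
  have key : ∀ m : ℕ, ∀ i : Fin n, dpt z hz i = m → cVec S z hz t₀ sgn i ≠ 0 := by
    intro m
    induction m with
    | zero =>
      intro i hi
      have hne : z i ≠ 0 := by
        intro hzi
        rw [dpt_succ z hz hzi] at hi; omega
      rw [cVec_of_ne hne]; exact hne
    | succ m ih =>
      intro i hi
      have hzi : z i = 0 := by
        by_contra hne
        rw [dpt_eq_zero z hz hne] at hi; omega
      have hd : dpt z hz (i - 1) = m := by
        have := dpt_succ z hz hzi; omega
      rw [cVec_of_eq hzi]
      have hsub : S.sub t₀ i ≠ 0 := by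
        have := sub_mul_sub_pos S t₀ t₀ i; intro hh; rw [hh] at this; simp at this
      exact mul_ne_zero (mul_ne_zero hsgn hsub) (ih (i - 1) hd)
  exact key _ i rfl

lemma cVec_delta_neg {S : LinCNF n} {z : Fin n → ℝ} {hz : ∃ j, z j ≠ 0} {t₀ : ℝ}
    {i : Fin n} (hi : z i = 0) :
    cyclicDelta n i * cVec S z hz t₀ (-1) i * cVec S z hz t₀ (-1) (i - 1) < 0 := by
  rw [cVec_of_eq hi]
  have h1 := delta_mul_sub_pos S t₀ i
  have h2 : cVec S z hz t₀ (-1) (i - 1) ≠ 0 := cVec_ne_zero (by norm_num) (i - 1)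
  have h3 : 0 < cVec S z hz t₀ (-1) (i - 1) * cVec S z hz t₀ (-1) (i - 1) :=
    mul_self_pos.2 h2
  nlinarith

lemma base_sign {S : LinCNF n} {x : ℝ → Fin n → ℝ} (hx : S.IsSolution x) (t₀ : ℝ)
    {i : Fin n} (hne : x t₀ i ≠ 0) :
    ∃ ε > 0, ∀ t, dist t t₀ < ε → x t₀ i * x t i > 0 := by
  have hcont : ContinuousAt (fun t => x t₀ i * x t i) t₀ :=
    continuousAt_const.mul (hx t₀ i).continuousAt
  have hev : ∀ᶠ t in 𝓝 t₀, x t₀ i * x t i ∈ Set.Ioi (0:ℝ) :=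
    hcont.eventually_mem (Ioi_mem_nhds (mul_self_pos.2 hne))
  rw [Metric.eventually_nhds_iff] at hev
  obtain ⟨ε, hε, hev⟩ := hev
  exact ⟨ε, hε, fun t ht => hev ht⟩

lemma traj_right {S : LinCNF n} {x : ℝ → Fin n → ℝ} (hx : S.IsSolution x) (t₀ : ℝ)
    (hnz : ∃ j, x t₀ j ≠ 0) :
    ∃ ε > 0, ∀ i, ∀ t ∈ Set.Ioo t₀ (t₀ + ε),
      cVec S (x t₀) hnz t₀ 1 i * x t i > 0 := by
  have key : ∀ m : ℕ, ∀ i : Fin n, dpt (x t₀) hnz i = m →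
      ∃ ε > 0, ∀ t ∈ Set.Ioo t₀ (t₀ + ε), cVec S (x t₀) hnz t₀ 1 i * x t i > 0 := by
    intro m
    induction m with
    | zero =>
      intro i hi
      have hne : x t₀ i ≠ 0 := by
        intro hzi; rw [dpt_succ _ hnz hzi] at hi; omega
      obtain ⟨ε, hε, hev⟩ := base_sign hx t₀ hne
      refine ⟨ε, hε, fun t ht => ?_⟩
      rw [cVec_of_ne hne]
      exact hev t (by rw [Real.dist_eq, abs_lt]; constructor <;> [linarith [ht.1]; linarith [ht.2]])
    | succ m ih =>
      intro i hi
      have hzi : x t₀ i = 0 := by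
        by_contra hne; rw [dpt_eq_zero _ hnz hne] at hi; omega
      have hd : dpt (x t₀) hnz (i - 1) = m := by
        have := dpt_succ _ hnz hzi; omega
      obtain ⟨ε, hε, hev⟩ := ih (i - 1) hd
      refine ⟨ε, hε, fun t ht => ?_⟩
      have := sign_right hx hzi (fun s hs => hev s hs) t ht
      rw [cVec_of_eq hzi]
      calc (0:ℝ) < (S.sub t₀ i * cVec S (x t₀) hnz t₀ 1 (i-1)) * x t i := this
      _ = 1 * S.sub t₀ i * cVec S (x t₀) hnz t₀ 1 (i-1) * x t i := by ring
  have hper : ∀ i : Fin n, ∃ ε > 0, ∀ t ∈ Set.Ioo t₀ (t₀ + ε),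
      cVec S (x t₀) hnz t₀ 1 i * x t i > 0 := fun i => key _ i rfl
  choose ε hε hprop using hper
  refine ⟨Finset.univ.inf' Finset.univ_nonempty ε, ?_, ?_⟩
  · exact (Finset.lt_inf'_iff _).2 fun i _ => hε i
  · intro i t ht
    refine hprop i t ⟨ht.1, ht.2.trans_le ?_⟩
    have := Finset.inf'_le ε (Finset.mem_univ i)
    linarith

lemma traj_left {S : LinCNF n} {x : ℝ → Fin n → ℝ} (hx : S.IsSolution x) (t₀ : ℝ)
    (hnz : ∃ j, x t₀ j ≠ 0) :
    ∃ ε > 0, ∀ i, ∀ t ∈ Set.Ioo (t₀ - ε) t₀,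
      cVec S (x t₀) hnz t₀ (-1) i * x t i > 0 := by
  have key : ∀ m : ℕ, ∀ i : Fin n, dpt (x t₀) hnz i = m →
      ∃ ε > 0, ∀ t ∈ Set.Ioo (t₀ - ε) t₀, cVec S (x t₀) hnz t₀ (-1) i * x t i > 0 := by
    intro m
    induction m with
    | zero =>
      intro i hi
      have hne : x t₀ i ≠ 0 := by
        intro hzi; rw [dpt_succ _ hnz hzi] at hi; omega
      obtain ⟨ε, hε, hev⟩ := base_sign hx t₀ hne
      refine ⟨ε, hε, fun t ht => ?_⟩
      rw [cVec_of_ne hne]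
      exact hev t (by rw [Real.dist_eq, abs_lt]; constructor <;> [linarith [ht.1]; linarith [ht.2]])
    | succ m ih =>
      intro i hi
      have hzi : x t₀ i = 0 := by
        by_contra hne; rw [dpt_eq_zero _ hnz hne] at hi; omega
      have hd : dpt (x t₀) hnz (i - 1) = m := by
        have := dpt_succ _ hnz hzi; omega
      obtain ⟨ε, hε, hev⟩ := ih (i - 1) hd
      refine ⟨ε, hε, fun t ht => ?_⟩
      have := sign_left hx hzi (fun s hs => hev s hs) t ht
      rw [cVec_of_eq hzi]
      calc (0:ℝ) < (-(S.sub t₀ i) * cVec S (x t₀) hnz t₀ (-1) (i-1)) * x t i := this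
      _ = -1 * S.sub t₀ i * cVec S (x t₀) hnz t₀ (-1) (i-1) * x t i := by ring
  have hper : ∀ i : Fin n, ∃ ε > 0, ∀ t ∈ Set.Ioo (t₀ - ε) t₀,
      cVec S (x t₀) hnz t₀ (-1) i * x t i > 0 := fun i => key _ i rfl
  choose ε hε hprop using hper
  refine ⟨Finset.univ.inf' Finset.univ_nonempty ε, ?_, ?_⟩
  · exact (Finset.lt_inf'_iff _).2 fun i _ => hε i
  · intro i t ht
    refine hprop i t ⟨?_, ht.2⟩
    have := Finset.inf'_le ε (Finset.mem_univ i)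
    have h2 := ht.1
    linarith
end traj

section comb
variable {n : ℕ} [NeZero n]

lemma same_side {a b c : ℝ} (h1 : a * c > 0) (h2 : b * c > 0) : a * b > 0 := by
  rcases lt_trichotomy c 0 with h | h | h
  · have ha : a < 0 := by nlinarith
    have hb : b < 0 := by nlinarith
    exact mul_pos_of_neg_of_neg ha hb
  · rw [h, mul_zero] at h1; linarith
  · have ha : 0 < a := by nlinarith
    have hb : 0 < b := by nlinarith
    exact mul_pos ha hb

lemma pos_fac {a b : ℝ} (hab : a * b > 0) (hb : b > 0) : a > 0 := by nlinarith

lemma fin_sub_one_val (hn : 2 ≤ n) (q : Fin n) :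
    (q - 1).val = if q.val = 0 then n - 1 else q.val - 1 := by
  have h1 : (1 : Fin n).val = 1 := by
    rw [Fin.val_one']; exact Nat.mod_eq_of_lt (by omega)
  have h := Fin.coe_int_sub_eq_ite q 1
  split_ifs at h with hc
  · rw [Fin.le_def, h1] at hc
    rw [h1] at h
    split_ifs with hq <;> omega
  · rw [Fin.le_def, h1, not_le] at hc
    rw [h1] at h
    split_ifs with hq <;> omega

/-- If the sign pattern of `y` matches `z` off the zero set of `z`, and `τ` is a
completion of the sign pattern of `z` which alternates (in the δ-weighted sense) on
the zero set of `z`, then `N(y) ≤ N(τ)`. -/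
lemma comb (hn : 2 ≤ n) (z τ : Fin n → ℝ) (hz : ∃ j, z j ≠ 0)
    (hτ : ∀ i, τ i ≠ 0)
    (hτz : ∀ i, z i ≠ 0 → τ i * z i > 0)
    (hτa : ∀ i, z i = 0 → cyclicDelta n i * τ i * τ (i - 1) < 0) :
    ∀ y : Fin n → ℝ, (∀ i, y i ≠ 0) → (∀ i, z i ≠ 0 → y i * z i > 0) →
      cyclicN n y ≤ cyclicN n τ := by
  classical
  have hδne : ∀ p : Fin n, cyclicDelta n p ≠ 0 := by
    intro p; rcases cyclicDelta_cases p with h | h <;> rw [h] <;> norm_num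
  -- bad positions of y
  set bad : (Fin n → ℝ) → Finset (Fin n) :=
    fun y => Finset.univ.filter fun p => z p = 0 ∧ 0 < cyclicDelta n p * y p * y (p - 1)
    with hbad
  suffices main : ∀ B : ℕ, ∀ y : Fin n → ℝ, (∀ i, y i ≠ 0) → (∀ i, z i ≠ 0 → y i * z i > 0) →
      (bad y).card = B → cyclicN n y ≤ cyclicN n τ by
    intro y hy hyz
    exact main _ y hy hyz rfl
  intro B
  induction B using Nat.strong_induction_on with
  | _ B ihB =>
  intro y hy hyz hcard
  rcases Nat.eq_zero_or_pos B with rfl | hpos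
  · -- base case : no bad positions, sign pattern of y matches that of τ
    have hgood : ∀ p, z p = 0 → cyclicDelta n p * y p * y (p - 1) < 0 := by
      intro p hzp
      by_contra hge
      have hne : cyclicDelta n p * y p * y (p - 1) ≠ 0 :=
        mul_ne_zero (mul_ne_zero (hδne p) (hy p)) (hy (p - 1))
      have hmem : p ∈ bad y := by
        rw [hbad]
        simp only [Finset.mem_filter, Finset.mem_univ, true_and]
        exact ⟨hzp, lt_of_le_of_ne (not_lt.mp hge) (Ne.symm hne)⟩
      rw [Finset.card_eq_zero] at hcard
      rw [hcard] at hmem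
      exact absurd hmem (Finset.notMem_empty p)
    have hsign : ∀ p, y p * τ p > 0 := by
      have key : ∀ m : ℕ, ∀ p : Fin n, dpt z hz p = m → y p * τ p > 0 := by
        intro m
        induction m with
        | zero =>
          intro p hp
          have hne : z p ≠ 0 := by
            intro hzp; rw [dpt_succ z hz hzp] at hp; omega
          exact same_side (hyz p hne) (hτz p hne)
        | succ m ih =>
          intro p hp
          have hzp : z p = 0 := by
            by_contra hne; rw [dpt_eq_zero z hz hne] at hp; omega
          have hd : dpt z hz (p - 1) = m := by
            have := dpt_succ z hz hzp; omega
          have ihp := ih (p - 1) hd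
          have h1 := hgood p hzp
          have h2 := hτa p hzp
          have hP : (y p * τ p) * (y (p - 1) * τ (p - 1)) > 0 := by
            rcases cyclicDelta_cases p with h | h <;> rw [h] at h1 h2 <;> nlinarith
          exact pos_fac hP ihp
      exact fun p => key _ p rfl
    exact le_of_eq (cyclicN_congr hsign)
  · -- inductive step : flip the tail of a block after a bad position
    obtain ⟨i, hi⟩ := Finset.card_pos.mp (by omega : 0 < (bad y).card)
    rw [hbad] at hi
    simp only [Finset.mem_filter, Finset.mem_univ, true_and] at hi
    obtain ⟨hzi, hbadi⟩ := hi
    obtain ⟨j₀, hj₀⟩ := hz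
    have hij : i ≠ j₀ := fun hh => hj₀ (hh ▸ hzi)
    have hvalne : (j₀ - i).val ≠ 0 := by
      intro hh
      have : j₀ - i = 0 := Fin.ext (by simp [hh])
      have : j₀ = i := by
        have h2 := sub_eq_zero.mp this; exact h2
      exact hij this.symm
    have hex : ∃ l : ℕ, z (i + ((l + 1 : ℕ) : Fin n)) ≠ 0 := by
      refine ⟨(j₀ - i).val - 1, ?_⟩
      have : ((j₀ - i).val - 1 + 1 : ℕ) = (j₀ - i).val := by omega
      rw [this, Fin.cast_val_eq_self]
      rw [add_comm, sub_add_cancel]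
      exact hj₀
    set m : ℕ := Nat.find hex + 1 with hm
    have hm1 : z (i + ((m : ℕ) : Fin n)) ≠ 0 := Nat.find_spec hex
    have hm2 : ∀ s : ℕ, s < m → z (i + ((s : ℕ) : Fin n)) = 0 := by
      intro s hs
      rcases Nat.eq_zero_or_pos s with rfl | hspos
      · simpa using hzi
      · obtain ⟨l, rfl⟩ := Nat.exists_eq_succ_of_ne_zero hspos.ne'
        have := Nat.find_min hex (by omega : l < Nat.find hex)
        simpa using this
    have hmlt : m < n := by
      have hle : Nat.find hex ≤ (j₀ - i).val - 1 := by
        apply Nat.find_min'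
        have : ((j₀ - i).val - 1 + 1 : ℕ) = (j₀ - i).val := by omega
        rw [this, Fin.cast_val_eq_self, add_comm, sub_add_cancel]
        exact hj₀
      have := (j₀ - i).isLt
      omega
    have hmpos : 0 < m := by omega
    -- the flipped vector
    set y' : Fin n → ℝ := fun j => if (j - i).val < m then -y j else y j with hy'def
    -- index bookkeeping
    have hsv : ∀ p : Fin n, p = i + (((p - i).val : ℕ) : Fin n) := by
      intro p; rw [Fin.cast_val_eq_self, add_comm, sub_add_cancel]
    have hsvP : ∀ p : Fin n, ((p - 1 - i)).val =
        if (p - i).val = 0 then n - 1 else (p - i).val - 1 := by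
      intro p
      have : p - 1 - i = (p - i) - 1 := by abel
      rw [this, fin_sub_one_val hn]
    set e : Fin n → Prop := fun _ => True with he_dummy
    have hsve : ((i + ((m : ℕ) : Fin n)) - i).val = m := by
      rw [add_comm, add_sub_cancel_right, Fin.val_cast_of_lt hmlt]
    have hie : i ≠ i + ((m : ℕ) : Fin n) := by
      intro hh
      have : ((i + ((m : ℕ) : Fin n)) - i).val = 0 := by rw [← hh]; simp
      omega
    -- toggled coordinates are zero coordinates of z
    have htogz : ∀ p : Fin n, (p - i).val < m → z p = 0 := by
      intro p hp
      have := hm2 _ hp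
      rwa [← hsv p] at this
    -- basic facts about y'
    have hy'val : ∀ p : Fin n, ((p - i).val < m → y' p = -y p) ∧ (¬((p - i).val < m) → y' p = y p) := by
      intro p
      constructor <;> intro hp <;> simp only [hy'def] <;> [rw [if_pos hp]; rw [if_neg hp]]
    have hy'' : ∀ p, y' p ≠ 0 := by
      intro p
      by_cases hp : (p - i).val < m
      · rw [(hy'val p).1 hp]; exact neg_ne_zero.2 (hy p)
      · rw [(hy'val p).2 hp]; exact hy p
    have hy'z : ∀ p, z p ≠ 0 → y' p * z p > 0 := by
      intro p hzp
      have hp : ¬((p - i).val < m) := fun hc => hzp (htogz p hc)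
      rw [(hy'val p).2 hp]
      exact hyz p hzp
    -- terms at p ∉ {i, e} are unchanged
    have hterm : ∀ p : Fin n, p ≠ i → (p - i).val ≠ m →
        cyclicDelta n p * y' p * y' (p - 1) = cyclicDelta n p * y p * y (p - 1) := by
      intro p hpi hpe
      have hsp0 : (p - i).val ≠ 0 := by
        intro hh
        apply hpi
        have := hsv p; rw [hh] at this; simpa using this
      rcases lt_or_gt_of_ne hpe with hlt | hgt
      · -- both p and p-1 toggled
        have h1 : (p - i).val < m := hlt
        have h2 : (p - 1 - i).val < m := by rw [hsvP p, if_neg hsp0]; omega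
        rw [(hy'val p).1 h1, (hy'val (p-1)).1 h2]; ring
      · -- neither toggled
        have h1 : ¬((p - i).val < m) := by omega
        have h2 : ¬((p - 1 - i).val < m) := by
          rw [hsvP p, if_neg hsp0]; omega
        rw [(hy'val p).2 h1, (hy'val (p-1)).2 h2]
    -- term at i is flipped
    have htermi : cyclicDelta n i * y' i * y' (i - 1) = -(cyclicDelta n i * y i * y (i - 1)) := by
      have h1 : (i - i).val < m := by rw [sub_self]; simpa using hmpos
      have h2 : ¬((i - 1 - i).val < m) := by
        rw [hsvP i, if_pos (by simp)]
        omega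
      rw [(hy'val i).1 h1, (hy'val (i-1)).2 h2]; ring
    -- N(y) ≤ N(y')
    have hNle : cyclicN n y ≤ cyclicN n y' := by
      rw [cyclicN_eq_card y, cyclicN_eq_card y']
      set E : Fin n := i + ((m : ℕ) : Fin n) with hE
      have hsub : insert i ((NFin n y).erase E) ⊆ NFin n y' := by
        intro p hp
        rcases Finset.mem_insert.mp hp with rfl | hp
        · unfold NFin
          simp only [Finset.mem_filter, Finset.mem_univ, true_and]
          rw [htermi]; linarith
        · obtain ⟨hpE, hpmem⟩ := Finset.mem_erase.mp hp
          unfold NFin at hpmem ⊢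
          simp only [Finset.mem_filter, Finset.mem_univ, true_and] at hpmem ⊢
          have hpi : p ≠ i := by
            rintro rfl
            linarith
          have hpe : (p - i).val ≠ m := by
            intro hh
            apply hpE
            rw [hE, hsv p, hh]
          rw [hterm p hpi hpe]
          exact hpmem
      have hinot : i ∉ (NFin n y).erase E := by
        intro hmem
        have := (Finset.mem_erase.mp hmem).2
        unfold NFin at this
        simp only [Finset.mem_filter, Finset.mem_univ, true_and] at this
        linarith
      calc (NFin n y).card ≤ ((NFin n y).erase E).card + 1 := by
            have := Finset.pred_card_le_card_erase (s := NFin n y) (a := E)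
            omega
      _ = (insert i ((NFin n y).erase E)).card := (Finset.card_insert_of_notMem hinot).symm
      _ ≤ (NFin n y').card := Finset.card_le_card hsub
    -- bad y' = (bad y).erase i
    have hbady' : bad y' = (bad y).erase i := by
      ext p
      rw [hbad]
      simp only [Finset.mem_filter, Finset.mem_univ, true_and, Finset.mem_erase]
      constructor
      · rintro ⟨hzp, hpos'⟩
        have hpi : p ≠ i := by
          rintro rfl
          rw [htermi] at hpos'
          have : cyclicDelta n p * y p * y (p - 1) > 0 := hbadi
          linarith
        have hpe : (p - i).val ≠ m := by
          intro hh
          apply hm1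
          rwa [← hh, ← hsv p]
        rw [hterm p hpi hpe] at hpos'
        exact ⟨hpi, hzp, hpos'⟩
      · rintro ⟨hpi, hzp, hpos'⟩
        have hpe : (p - i).val ≠ m := by
          intro hh
          apply hm1
          rwa [← hh, ← hsv p]
        rw [hterm p hpi hpe]
        exact ⟨hzp, hpos'⟩
    have hcard' : (bad y').card = B - 1 := by
      rw [hbady', Finset.card_erase_of_mem, hcard]
      rw [hbad]
      simp only [Finset.mem_filter, Finset.mem_univ, true_and]
      exact ⟨hzi, hbadi⟩
    have := ihB (B - 1) (by omega) y' hy'' hy'z hcard'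
    omega
end comb

section invariance
variable {n : ℕ} [NeZero n]

lemma NM_le_left (hn : 2 ≤ n) (z τ : Fin n → ℝ) (hz : ∃ j, z j ≠ 0)
    (hτ : ∀ i, τ i ≠ 0)
    (hτz : ∀ i, z i ≠ 0 → τ i * z i > 0)
    (hτa : ∀ i, z i = 0 → cyclicDelta n i * τ i * τ (i - 1) < 0) :
    cyclicNM n z ≤ cyclicN n τ := by
  apply cyclicNM_le_of_eventually
  have h1 : ∀ᶠ y in 𝓝[cyclicLambda n] z, y ∈ cyclicLambda n := eventually_mem_nhdsWithin
  have h2 : ∀ᶠ y in 𝓝[cyclicLambda n] z, ∀ i, z i ≠ 0 → y i * z i > 0 :=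
    eventually_nhdsWithin_of_eventually_nhds (eventually_sign_match z)
  filter_upwards [h1, h2] with y hy1 hy2
  exact comb hn z τ hz hτ hτz hτa y hy1 hy2

lemma invariance {S : LinCNF n} (hn : 2 ≤ n) {x : ℝ → Fin n → ℝ} (hx : S.IsSolution x)
    (hx0 : x 0 ≠ 0) {m : ℕ} (hm : cyclicNM n (x 0) ≤ m) :
    ∀ t, 0 ≤ t → cyclicNM n (x t) ≤ m := by
  by_contra hcon
  push_neg at hcon
  obtain ⟨t₁, ht₁, hmt₁⟩ := hcon
  set B : Set ℝ := {t | 0 ≤ t ∧ m < cyclicNM n (x t)} with hBdef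
  have hBne : B.Nonempty := ⟨t₁, ht₁, hmt₁⟩
  have hBbdd : BddBelow B := ⟨0, fun t ht => ht.1⟩
  set t₀ : ℝ := sInf B with ht₀
  have ht₀0 : 0 ≤ t₀ := le_csInf hBne fun t ht => ht.1
  have hnz : ∀ t : ℝ, ∃ j, x t j ≠ 0 := by
    intro t
    by_contra hc; push_neg at hc
    have hxt : x t = 0 := funext fun j => hc j
    exact hx0 (sol_eq_zero hx hxt 0)
  rcases le_or_gt (cyclicNM n (x t₀)) m with hcase | hcase
  · -- sInf not in B : points just to the right of t₀ have small N, contradiction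
    obtain ⟨ε, hε, hR⟩ := traj_right hx t₀ (hnz t₀)
    set c : Fin n → ℝ := cVec S (x t₀) (hnz t₀) t₀ 1 with hc
    have hLam : ∀ t ∈ Set.Ioo t₀ (t₀ + ε), x t ∈ cyclicLambda n := by
      intro t ht i
      intro hzero
      have := hR i t ht
      rw [hzero, mul_zero] at this
      exact lt_irrefl 0 this
    have hmid : t₀ + ε / 2 ∈ Set.Ioo t₀ (t₀ + ε) := by constructor <;> linarith
    set k : ℕ := cyclicN n (x (t₀ + ε / 2)) with hk
    have hNconst : ∀ t ∈ Set.Ioo t₀ (t₀ + ε), cyclicN n (x t) = k := by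
      intro t ht
      apply cyclicN_congr
      intro i
      have h1 : x t i * c i > 0 := by rw [mul_comm]; exact hR i t ht
      have h2 : x (t₀ + ε / 2) i * c i > 0 := by rw [mul_comm]; exact hR i _ hmid
      exact same_side h1 h2
    have hkle : k ≤ cyclicNM n (x t₀) := by
      apply le_cyclicNM_of_tendsto (l := 𝓝[>] t₀) (φ := x)
      · rw [tendsto_nhdsWithin_iff]
        constructor
        · exact ((sol_continuous hx).tendsto t₀).mono_left nhdsWithin_le_nhds
        · filter_upwards [Ioo_mem_nhdsGT_of_mem (show t₀ ∈ Set.Ico t₀ (t₀ + ε) from ⟨le_refl t₀, by linarith⟩)]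
            with t ht
          exact hLam t ht
      · filter_upwards [Ioo_mem_nhdsGT_of_mem (show t₀ ∈ Set.Ico t₀ (t₀ + ε) from ⟨le_refl t₀, by linarith⟩)]
          with t ht
        exact hNconst t ht
    have hstep : ∀ b ∈ B, t₀ + ε ≤ b := by
      intro b hb
      by_contra hlt; push_neg at hlt
      have hbt₀ : t₀ ≤ b := csInf_le hBbdd hb
      rcases eq_or_lt_of_le hbt₀ with heq | hbgt
      · rw [← heq] at hb
        exact absurd hb.2 (not_lt.2 hcase)
      · have hbIoo : b ∈ Set.Ioo t₀ (t₀ + ε) := ⟨hbgt, hlt⟩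
        have hNb : cyclicNM n (x b) = k := by
          rw [cyclicNM_of_lam (hLam b hbIoo), hNconst b hbIoo]
        have := hb.2
        omega
    have : t₀ + ε ≤ t₀ := le_csInf hBne hstep
    linarith
  · -- sInf in B : points just to the left of t₀ realize the maximal sign completion
    have ht₀pos : 0 < t₀ := by
      rcases eq_or_lt_of_le ht₀0 with heq | h
      · exfalso
        rw [← heq] at hcase
        exact absurd hcase (not_lt.2 hm)
      · exact h
    obtain ⟨ε, hε, hL⟩ := traj_left hx t₀ (hnz t₀)
    set c : Fin n → ℝ := cVec S (x t₀) (hnz t₀) t₀ (-1) with hc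
    set ε' : ℝ := min ε t₀ with hε'def
    have hε' : 0 < ε' := lt_min hε ht₀pos
    set t' : ℝ := t₀ - ε' / 2 with ht'def
    have ht'Ioo : t' ∈ Set.Ioo (t₀ - ε) t₀ := by
      constructor
      · have := min_le_left ε t₀; simp only [ht'def]; linarith
      · simp only [ht'def]; linarith
    have ht'0 : 0 ≤ t' := by
      have := min_le_right ε t₀; simp only [ht'def]; linarith
    have hLsign : ∀ i, c i * x t' i > 0 := fun i => hL i t' ht'Ioo
    have hτ : ∀ i, x t' i ≠ 0 := by
      intro i hzero
      have := hLsign i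
      rw [hzero, mul_zero] at this
      exact lt_irrefl 0 this
    have hτz : ∀ i, x t₀ i ≠ 0 → x t' i * x t₀ i > 0 := by
      intro i hne
      have hcv : c i = x t₀ i := cVec_of_ne hne
      have := hLsign i
      rw [hcv] at this
      rw [mul_comm]
      exact this
    have hτa : ∀ i, x t₀ i = 0 → cyclicDelta n i * x t' i * x t' (i - 1) < 0 := by
      intro i hzi
      have hdel := cVec_delta_neg (S := S) (t₀ := t₀) (hz := hnz t₀) hzi
      have h1 : x t' i * c i > 0 := by rw [mul_comm]; exact hLsign i
      have h2 : x t' (i - 1) * c (i - 1) > 0 := by rw [mul_comm]; exact hLsign (i - 1)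
      exact (sign_transfer (cyclicDelta_cases i) h1 h2).mpr hdel
    have hNMle : cyclicNM n (x t₀) ≤ cyclicN n (x t') :=
      NM_le_left hn (x t₀) (x t') (hnz t₀) hτ hτz hτa
    have ht'B : t' ∈ B := by
      refine ⟨ht'0, ?_⟩
      rw [cyclicNM_of_lam hτ]
      omega
    have : t₀ ≤ t' := csInf_le hBbdd ht'B
    have := ht'Ioo.2
    linarith
end invariance


/-- If `Sig0 ⊆ K_h` is a linear subspace, its image `Σ_t` under
the fundamental solution operator has the same dimension for all `t`, and stays
inside `K_h` for `t ≥ 0`. -/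
theorem stmt6 (n : ℕ) [NeZero n] (hn : 2 ≤ n) (S : LinCNF n)
    (Φ : ℝ → (Fin n → ℝ) →ₗ[ℝ] (Fin n → ℝ)) (hΦ : S.IsFundamental Φ)
    (h : ℕ) (h1 : 1 ≤ h) (h2 : h ≤ (ntilde n + 1) / 2)
    (Sig0 : Submodule ℝ (Fin n → ℝ)) (hSig0 : (Sig0 : Set (Fin n → ℝ)) ⊆ Kcone n h) :
    (∀ t : ℝ, Module.finrank ℝ (Sig0.map (Φ t)) = Module.finrank ℝ Sig0) ∧
    (∀ t : ℝ, 0 ≤ t → ((Sig0.map (Φ t) : Submodule ℝ (Fin n → ℝ)) : Set (Fin n → ℝ)) ⊆ Kcone n h) := by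
  have hzero : ∀ u : Fin n → ℝ, ∀ t : ℝ, Φ t u = 0 → u = 0 := by
    intro u t hu
    have hsol : S.IsSolution fun s => Φ s u := hΦ.2 u
    have h0 := sol_eq_zero hsol (t₁ := t) hu 0
    simp only [hΦ.1, LinearMap.id_coe, id_eq] at h0
    exact h0
  have hinj : ∀ t : ℝ, Function.Injective (Φ t) := by
    intro t u v huv
    have : Φ t (u - v) = 0 := by rw [map_sub, huv, sub_self]
    have := hzero (u - v) t this
    exact sub_eq_zero.mp this
  constructor
  · intro t
    exact (Submodule.equivMapOfInjective (Φ t) (hinj t) Sig0).finrank_eq.symm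
  · intro t ht y hy
    simp only [Submodule.map_coe, Set.mem_image, SetLike.mem_coe] at hy
    obtain ⟨v, hv, rfl⟩ := hy
    by_cases hv0 : v = 0
    · subst hv0
      rw [map_zero]
      exact Or.inl rfl
    · have hKv := hSig0 hv
      have hNM : cyclicNM n v ≤ 2 * h - 1 := by
        rcases hKv with h0 | hN
        · exact absurd h0 hv0
        · exact hN
      have hx : S.IsSolution fun s => Φ s v := hΦ.2 v
      have hx00 : (fun s => Φ s v) 0 = v := by
        simp only [hΦ.1, LinearMap.id_coe, id_eq]
      have hx0 : (fun s => Φ s v) 0 ≠ 0 := by rw [hx00]; exact hv0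
      have hinv := invariance hn hx hx0 (m := 2 * h - 1) (by show cyclicNM n ((fun s => (Φ s) v) 0) ≤ 2 * h - 1; rw [hx00]; exact hNM) t ht
      exact Or.inr hinv
end

section
/- Suppose n is even and let A be the n × n real matrix with A_{i,i−1} = 1 for 2 ≤ i ≤ n, A_{1,n} = −1, and all other entries 0. Then there exist n/2 linear subspaces E₁, …, E_{n/2} of ℝⁿ, each of dimension 2 and each invariant under A (A E_k ⊂ E_k), such that every nonzero vector ξ ∈ E_k satisfies ξ ∈ 𝒩 and N(ξ) = 2k − 1. -/
open Filter Topology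

/-- The matrix with `A_{i,i−1} = 1` for `2 ≤ i ≤ n`, `A_{1,n} = −1`
(cyclically, the entry in row `i`, column `i − 1` is `δᵢ`) and all other
entries `0`. -/
def Amat (n : ℕ) [NeZero n] : Matrix (Fin n) (Fin n) ℝ :=
  fun i j => if j = i - 1 then cyclicDelta n i else 0

open Fin.NatCast

private lemma telescope_count (m : ℕ → ℤ) (n : ℕ)
    (hstep : ∀ j < n, m (j+1) = m j ∨ m (j+1) = m j + 1) :
    (∑ j ∈ Finset.range n, (if m (j+1) = m j + 1 then (1:ℤ) else 0)) = m n - m 0 := by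
  induction n with
  | zero => simp
  | succ p ih =>
    rw [Finset.sum_range_succ, ih (fun j hj => hstep j (Nat.lt_succ_of_lt hj))]
    rcases hstep p (Nat.lt_succ_self p) with h | h
    · rw [if_neg (by omega), h]; ring
    · rw [if_pos h, h]; ring

private lemma fin_cast_sub_one_val (n : ℕ) [NeZero n] (j : ℕ) (h1 : 1 ≤ j) (h2 : j ≤ n) :
    (((j : Fin n) - 1 : Fin n)).val = j - 1 := by
  have hn : 0 < n := Nat.pos_of_ne_zero (NeZero.ne n)
  have h : (j : Fin n) = ((j - 1 : ℕ) : Fin n) + 1 := by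
    conv_lhs => rw [show j = (j - 1) + 1 by omega]
    push_cast
    ring
  rw [h, add_sub_cancel_right, Fin.val_natCast, Nat.mod_eq_of_lt (by omega)]

private lemma fin_sub_one_val_s9 (n : ℕ) [NeZero n] (i : Fin n) (h : i ≠ 0) :
    (i - 1).val = i.val - 1 := by
  have h1 : 1 ≤ i.val := Nat.pos_of_ne_zero (fun hh => h (Fin.ext hh))
  have := fin_cast_sub_one_val n i.val h1 i.isLt.le
  rwa [Fin.cast_val_eq_self] at this

private lemma fin_zero_sub_one_val (n : ℕ) [NeZero n] :
    ((0 : Fin n) - 1).val = n - 1 := by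
  have hn : 1 ≤ n := Nat.pos_of_ne_zero (NeZero.ne n)
  rw [show (0 : Fin n) = ((n : ℕ) : Fin n) from (Fin.natCast_self n).symm]
  exact fin_cast_sub_one_val n n hn le_rfl

private lemma neg_one_zpow_mul_self (z : ℤ) : ((-1:ℝ)^z) * ((-1:ℝ)^z) = 1 := by
  rw [← zpow_add₀ (by norm_num : (-1:ℝ) ≠ 0)]
  exact Even.neg_one_zpow ⟨z, by ring⟩

private lemma cyclicN_eq_of_sign (n : ℕ) [NeZero n] (k : ℕ) (α θ : ℝ)
    (hα : (n:ℝ) * α = (2*k+1) * Real.pi) (hα0 : 0 < α) (hαπ : α < Real.pi)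
    (y : Fin n → ℝ) (hy : ∀ i, y i ≠ 0)
    (hcompat : ∀ i : Fin n, Real.cos ((i.val : ℝ) * α - θ) ≠ 0 →
      0 < Real.cos ((i.val : ℝ) * α - θ) * y i) :
    cyclicN n y = 2*k+1 := by
  have hπ := Real.pi_pos
  have hn0 : 0 < n := Nat.pos_of_ne_zero (NeZero.ne n)
  obtain ⟨u, hu⟩ : ∃ u : ℕ → ℝ, u = fun j => ((((j:ℕ):ℝ) - 1) * α - θ)/Real.pi + 1/2 := ⟨_, rfl⟩
  obtain ⟨c, hc⟩ : ∃ c : ℕ → ℝ, c = fun j => Real.cos ((((j:ℕ):ℝ) - 1) * α - θ) := ⟨_, rfl⟩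
  obtain ⟨y', hy'⟩ : ∃ y' : ℕ → ℝ, y' = fun j : ℕ => (if j = 0 then (-1:ℝ) else 1) * y (((j : ℕ) : Fin n) - 1) := ⟨_, rfl⟩
  have hy'ne : ∀ j, y' j ≠ 0 := by
    intro j
    simp only [hy']
    split_ifs <;> simp [hy]
  -- c in terms of sin
  have hcsin : ∀ j, c j = Real.sin (Real.pi * u j) := by
    intro j
    have : Real.pi * u j = ((((j:ℕ):ℝ) - 1) * α - θ) + Real.pi/2 := by
      simp only [hu]
      field_simp
    rw [this, Real.sin_add_pi_div_two, hc]
  -- wrap lemma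
  have hwrap : ∀ x : ℝ, Real.cos (x + (2*(k:ℝ)+1)*Real.pi) = -Real.cos x := by
    intro x
    rw [show x + (2*(k:ℝ)+1)*Real.pi = (x + Real.pi) + (k:ℤ)*(2*Real.pi) by push_cast; ring,
      Real.cos_add_int_mul_two_pi, Real.cos_add_pi]
  -- compatibility in shifted form
  have hcy : ∀ j ≤ n, c j ≠ 0 → 0 < c j * y' j := by
    intro j hjn hcne
    rcases Nat.eq_zero_or_pos j with rfl | hj1
    · -- j = 0
      have hval : ((0 : Fin n) - 1).val = n - 1 := fin_zero_sub_one_val n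
      have hrel : Real.cos ((((n - 1 : ℕ):ℝ)) * α - θ) = - c 0 := by
        have hcast : (((n - 1 : ℕ):ℝ)) = (n:ℝ) - 1 := by
          push_cast [Nat.cast_sub hn0]
          ring
        rw [hcast, hc]
        have : ((n:ℝ) - 1) * α - θ = ((((0:ℕ):ℝ) - 1) * α - θ) + (2*(k:ℝ)+1)*Real.pi := by
          push_cast
          linarith [hα]
        rw [this, hwrap]
      have hi : Real.cos (((((0:Fin n) - 1).val : ℕ):ℝ) * α - θ) = - c 0 := by
        rw [hval]; exact hrel
      have hcompat0 := hcompat ((0:Fin n) - 1) (by rw [hi]; simpa using hcne)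
      rw [hi] at hcompat0
      have hy0 : y' 0 = -1 * y ((0:Fin n) - 1) := by simp [hy']
      rw [hy0]
      nlinarith [hcompat0]
    · -- 1 ≤ j
      have hval : (((j : Fin n) - 1).val) = j - 1 := fin_cast_sub_one_val n j hj1 hjn
      have hcast : (((j - 1 : ℕ):ℝ)) = (j:ℝ) - 1 := by
        push_cast [Nat.cast_sub hj1]; ring
      have hi : Real.cos (((((j:Fin n) - 1).val : ℕ):ℝ) * α - θ) = c j := by
        rw [hval, hcast, hc]
      have hcompat1 := hcompat ((j:Fin n) - 1) (by rw [hi]; exact hcne)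
      rw [hi] at hcompat1
      have hyj : y' j = y ((j:Fin n) - 1) := by
        simp only [hy', if_neg (show ¬ j = 0 by omega), one_mul]
      rw [hyj]; exact hcompat1
  -- the integer band sequence
  obtain ⟨m, hm⟩ : ∃ m : ℕ → ℤ,
      m = fun j => if 0 < (-1:ℝ)^(⌊u j⌋) * y' j then ⌊u j⌋ else ⌊u j⌋ - 1 := ⟨_, rfl⟩
  have hm_sign : ∀ j, 0 < (-1:ℝ)^(m j) * y' j := by
    intro j
    simp only [hm]
    split_ifs with hpos
    · exact hpos
    · have hne : (-1:ℝ)^(⌊u j⌋) * y' j ≠ 0 :=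
        mul_ne_zero (zpow_ne_zero _ (by norm_num)) (hy'ne j)
      have hlt : (-1:ℝ)^(⌊u j⌋) * y' j < 0 := lt_of_le_of_ne (not_lt.1 hpos) hne
      have : (-1:ℝ)^(⌊u j⌋ - 1) = -((-1:ℝ)^(⌊u j⌋)) := by
        rw [zpow_sub_one₀ (by norm_num : (-1:ℝ) ≠ 0)]
        norm_num
      rw [this]
      nlinarith [hlt]
  -- key: if u j is not an integer then the branch condition holds
  have hkey : ∀ j ≤ n, (¬ ∃ z : ℤ, (z:ℝ) = u j) → 0 < (-1:ℝ)^(⌊u j⌋) * y' j := by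
    intro j hjn hint
    have hfr : 0 < Int.fract (u j) :=
      Int.fract_pos.2 (fun h => hint ⟨⌊u j⌋, h.symm⟩)
    have hfr1 : Int.fract (u j) < 1 := Int.fract_lt_one _
    have hsinpos : 0 < Real.sin (Real.pi * Int.fract (u j)) :=
      Real.sin_pos_of_pos_of_lt_pi (by positivity) (by nlinarith)
    have hcval : c j = (-1:ℝ)^(⌊u j⌋) * Real.sin (Real.pi * Int.fract (u j)) := by
      rw [hcsin j]
      have h1 : u j = (⌊u j⌋ : ℝ) + Int.fract (u j) := (Int.floor_add_fract _).symm
      conv_lhs => rw [h1]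
      rw [show Real.pi * ((⌊u j⌋ : ℝ) + Int.fract (u j))
        = Real.pi * Int.fract (u j) + (⌊u j⌋ : ℝ) * Real.pi by ring,
        Real.sin_add_int_mul_pi]
    have hAc : 0 < (-1:ℝ)^(⌊u j⌋) * c j := by
      rw [hcval, ← mul_assoc, neg_one_zpow_mul_self, one_mul]
      exact hsinpos
    have hcne : c j ≠ 0 := by
      intro h0
      rw [h0, mul_zero] at hAc
      exact lt_irrefl 0 hAc
    have hcyj := hcy j hjn hcne
    nlinarith [mul_pos hAc hcyj, mul_self_pos.2 hcne]
  have hm_bound : ∀ j ≤ n, (m j : ℝ) ≤ u j ∧ u j - 1 ≤ m j := by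
    intro j hjn
    simp only [hm]
    split_ifs with hpos
    · exact ⟨Int.floor_le _, (Int.sub_one_lt_floor _).le⟩
    · by_cases hint : ∃ z : ℤ, (z:ℝ) = u j
      · obtain ⟨z, hz⟩ := hint
        have hfl : ⌊u j⌋ = z := by rw [← hz, Int.floor_intCast]
        rw [hfl]
        constructor
        · push_cast; rw [← hz]; linarith
        · push_cast; rw [← hz]
      · exact absurd (hkey j hjn hint) hpos
  have hfrac0 : 0 < α / Real.pi := div_pos hα0 hπ
  have hfrac1 : α / Real.pi < 1 := (div_lt_one hπ).2 hαπ
  have hustep : ∀ j : ℕ, u (j+1) = u j + α / Real.pi := by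
    intro j
    simp only [hu]
    push_cast
    field_simp
    ring
  have hstep : ∀ j < n, m (j+1) = m j ∨ m (j+1) = m j + 1 := by
    intro j hj
    obtain ⟨e1, e2⟩ := hm_bound j hj.le
    obtain ⟨d1, d2⟩ := hm_bound (j+1) hj
    rw [hustep j] at d1 d2
    have hl : (m j : ℝ) - 1 < m (j+1) := by linarith [d2, e1, hfrac0]
    have hr : (m (j+1) : ℝ) < m j + 2 := by linarith [d1, e2, hfrac1]
    have hl' : m j - 1 < m (j+1) := by exact_mod_cast hl
    have hr' : m (j+1) < m j + 2 := by exact_mod_cast hr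
    omega
  -- endpoint relation
  have hun : u n = u 0 + (2*(k:ℝ)+1) := by
    simp only [hu]
    push_cast
    field_simp
    linarith [hα]
  have hfln : ⌊u n⌋ = ⌊u 0⌋ + (2*(k:ℤ)+1) := by
    have h2 : u n = u 0 + ((2*(k:ℤ)+1 : ℤ) : ℝ) := by rw [hun]; push_cast; ring
    rw [h2, Int.floor_add_intCast]
  have hy'n : y' n = -y' 0 := by
    simp only [hy']
    rw [if_neg (show ¬ n = 0 from NeZero.ne n)]
    norm_num [Fin.natCast_self]
  have hodd : (-1:ℝ)^(2*(k:ℤ)+1) = -1 := Odd.neg_one_zpow ⟨(k:ℤ), by ring⟩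
  have hAn : (-1:ℝ)^(⌊u 0⌋ + (2*(k:ℤ)+1)) * y' n = (-1:ℝ)^(⌊u 0⌋) * y' 0 := by
    rw [hy'n, zpow_add₀ (by norm_num : (-1:ℝ) ≠ 0), hodd]
    ring
  have hcond : (0 < (-1:ℝ)^(⌊u 0⌋ + (2*(k:ℤ)+1)) * y' n) ↔ (0 < (-1:ℝ)^(⌊u 0⌋) * y' 0) := by
    rw [hAn]
  have hends : m n = m 0 + (2*(k:ℤ)+1) := by
    simp only [hm, hfln]
    by_cases hco : 0 < (-1:ℝ)^(⌊u 0⌋) * y' 0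
    · rw [if_pos (hcond.2 hco), if_pos hco]
    · rw [if_neg (fun hh => hco (hcond.1 hh)), if_neg hco]
      ring
  -- equivalence of the counted condition with integer steps
  have hiff : ∀ i : Fin n,
      (cyclicDelta n i * y i * y (i - 1) < 0) ↔ m (i.val + 1) = m i.val + 1 := by
    intro i
    have h1 : y' (i.val + 1) = y i := by
      simp only [hy', if_neg (Nat.succ_ne_zero i.val)]
      push_cast
      rw [add_sub_cancel_right, one_mul]
    have hprod : cyclicDelta n i * y i * y (i - 1) = y' (i.val + 1) * y' i.val := by
      by_cases h0 : i = 0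
      · subst h0
        have h2 : y' (0 : Fin n).val = -1 * y ((0:Fin n) - 1) := by
          simp only [Fin.val_zero, hy', if_pos rfl, Nat.cast_zero]
          norm_num
        rw [h1, h2]
        simp only [cyclicDelta, if_pos rfl]
        norm_num
      · have hv0 : i.val ≠ 0 := fun hh => h0 (Fin.ext hh)
        have h2 : y' i.val = y (i - 1) := by
          simp only [hy', if_neg hv0, Fin.cast_val_eq_self, one_mul]
        rw [h1, h2]
        simp only [cyclicDelta, if_neg h0]
        ring
    rw [hprod]
    have s2 := hm_sign i.val
    have s1 := hm_sign (i.val + 1)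
    rcases hstep i.val i.isLt with h | h
    · constructor
      · intro hlt
        exfalso
        rw [h] at s1
        have hpp := mul_pos s1 s2
        have heq : ((-1:ℝ)^(m i.val) * y' (i.val+1)) * ((-1:ℝ)^(m i.val) * y' i.val)
            = ((-1:ℝ)^(m i.val) * (-1:ℝ)^(m i.val)) * (y' (i.val+1) * y' i.val) := by ring
        rw [heq, neg_one_zpow_mul_self, one_mul] at hpp
        linarith
      · intro h'
        omega
    · refine ⟨fun _ => h, fun _ => ?_⟩
      rw [h, zpow_add_one₀ (by norm_num : (-1:ℝ) ≠ 0)] at s1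
      have hneg' : (-1:ℝ)^(m i.val) * y' (i.val+1) < 0 := by nlinarith
      have hnn := mul_neg_of_neg_of_pos hneg' s2
      have heq : ((-1:ℝ)^(m i.val) * y' (i.val+1)) * ((-1:ℝ)^(m i.val) * y' i.val)
          = ((-1:ℝ)^(m i.val) * (-1:ℝ)^(m i.val)) * (y' (i.val+1) * y' i.val) := by ring
      rw [heq, neg_one_zpow_mul_self, one_mul] at hnn
      exact hnn
  -- counting
  classical
  have hcount : cyclicN n y
      = ∑ j ∈ Finset.range n, (if m (j+1) = m j + 1 then 1 else 0) := by
    unfold cyclicN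
    rw [Nat.card_congr (Equiv.subtypeEquivRight hiff)]
    rw [Nat.card_eq_fintype_card, Fintype.card_subtype, Finset.card_filter]
    exact Fin.sum_univ_eq_sum_range (fun j => if m (j+1) = m j + 1 then 1 else 0) n
  have hZ := telescope_count m n hstep
  rw [hends] at hZ
  have hZ2 : ((∑ j ∈ Finset.range n, (if m (j+1) = m j + 1 then (1:ℕ) else 0) : ℕ) : ℤ)
      = 2*(k:ℤ)+1 := by
    push_cast
    rw [hZ]
    ring
  rw [hcount]
  exact_mod_cast hZ2
private lemma cyclicNmM_def (n : ℕ) [NeZero n] (x : Fin n → ℝ) :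
    cyclicNm n x = sInf {k | ∃ᶠ y in 𝓝[cyclicLambda n] x, cyclicN n y = k} ∧
    cyclicNM n x = sSup {k | ∃ᶠ y in 𝓝[cyclicLambda n] x, cyclicN n y = k} :=
  ⟨rfl, rfl⟩

private lemma lambda_nhdsWithin_neBot (n : ℕ) [NeZero n] (ξ : Fin n → ℝ) :
    (𝓝[cyclicLambda n] ξ).NeBot := by
  rw [← mem_closure_iff_nhdsWithin_neBot]
  have htend : Filter.Tendsto
      (fun (m : ℕ) => fun i => if ξ i = 0 then 1/((m:ℝ)+1) else ξ i)
      Filter.atTop (𝓝 ξ) := by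
    rw [tendsto_pi_nhds]
    intro i
    by_cases h : ξ i = 0
    · simpa [h] using tendsto_one_div_add_atTop_nhds_zero_nat (𝕜 := ℝ)
    · simpa [h] using tendsto_const_nhds
  refine mem_closure_of_tendsto htend (Filter.Eventually.of_forall ?_)
  intro q
  intro i
  by_cases h : ξ i = 0 <;> simp [h]
  positivity

private lemma good_of_cos (n : ℕ) [NeZero n] (k : ℕ) (α θ r : ℝ)
    (hα : (n:ℝ) * α = (2*k+1) * Real.pi) (hα0 : 0 < α) (hαπ : α < Real.pi)
    (hr : 0 < r) (ξ : Fin n → ℝ)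
    (hξ : ∀ i : Fin n, ξ i = r * Real.cos ((i.val:ℝ) * α - θ)) :
    cyclicNm n ξ = 2*k+1 ∧ cyclicNM n ξ = 2*k+1 := by
  haveI := lambda_nhdsWithin_neBot n ξ
  have hsign : ∀ᶠ y in 𝓝 ξ, ∀ i, ξ i ≠ 0 → 0 < ξ i * y i := by
    rw [Filter.eventually_all]
    intro i
    by_cases h : ξ i = 0
    · exact Filter.Eventually.of_forall (fun y hne => absurd h hne)
    · have hpos : 0 < ξ i * ξ i := mul_self_pos.2 h
      have ht : Filter.Tendsto (fun y : Fin n → ℝ => ξ i * y i) (𝓝 ξ) (𝓝 (ξ i * ξ i)) :=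
        tendsto_const_nhds.mul ((continuous_apply i).tendsto ξ)
      exact (ht.eventually (lt_mem_nhds hpos)).mono (fun y hy _ => hy)
  have hev : ∀ᶠ y in 𝓝[cyclicLambda n] ξ, cyclicN n y = 2*k+1 := by
    filter_upwards [hsign.filter_mono nhdsWithin_le_nhds, self_mem_nhdsWithin] with y hs hyΛ
    refine cyclicN_eq_of_sign n k α θ hα hα0 hαπ y (fun i => hyΛ i) ?_
    intro i hc
    have hne : ξ i ≠ 0 := by rw [hξ i]; exact mul_ne_zero hr.ne' hc
    have h2 := hs i hne
    rw [hξ i] at h2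
    nlinarith [h2, hr]
  have hset : {k' | ∃ᶠ y in 𝓝[cyclicLambda n] ξ, cyclicN n y = k'} = {2*k+1} := by
    ext k'
    simp only [Set.mem_setOf_eq, Set.mem_singleton_iff]
    constructor
    · intro hf
      obtain ⟨y, h1, h2⟩ := (hf.and_eventually hev).exists
      omega
    · rintro rfl
      exact hev.frequently
  constructor
  · show sInf _ = _
    rw [hset]
    exact csInf_singleton _
  · show sSup _ = _
    rw [hset]
    exact csSup_singleton _
private lemma amat_mulVec (n : ℕ) [NeZero n] (x : Fin n → ℝ) (i : Fin n) :
    (Amat n).mulVec x i = cyclicDelta n i * x (i - 1) := by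
  simp [Amat, Matrix.mulVec, dotProduct, ite_mul, Finset.sum_ite_eq]


/-- For `n` even, there are `n/2` two-dimensional
`A`-invariant subspaces `E₁, …, E_{n/2}` such that every nonzero `ξ ∈ E_k`
lies in `𝒩` with `N(ξ) = 2k − 1` (here `k : Fin (n/2)` corresponds to the
paper's index `k.val + 1`, so `2k − 1` becomes `2 k.val + 1`). -/
theorem stmt9 (n : ℕ) [NeZero n] (hn : 2 ≤ n) (heven : n % 2 = 0) :
    ∃ E : Fin (n / 2) → Submodule ℝ (Fin n → ℝ),
      (∀ k, Module.finrank ℝ (E k) = 2) ∧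
      (∀ k, ∀ x ∈ E k, (Amat n).mulVec x ∈ E k) ∧
      (∀ k, ∀ ξ ∈ E k, ξ ≠ 0 →
        ξ ∈ cyclicGood n ∧ cyclicNm n ξ = 2 * (k : ℕ) + 1) := by
  have hπ := Real.pi_pos
  have hnR : (0:ℝ) < n := by exact_mod_cast (by omega : 0 < n)
  obtain ⟨A, hA⟩ : ∃ A : Fin (n/2) → ℝ, A = fun k : Fin (n/2) => (2*((k:ℕ):ℝ)+1) * Real.pi / n := ⟨_, rfl⟩
  obtain ⟨v, hv⟩ : ∃ v : Fin (n/2) → Fin n → ℝ,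
      v = fun k (i : Fin n) => Real.cos ((i.val:ℝ) * A k) := ⟨_, rfl⟩
  obtain ⟨w, hw⟩ : ∃ w : Fin (n/2) → Fin n → ℝ,
      w = fun k (i : Fin n) => Real.sin ((i.val:ℝ) * A k) := ⟨_, rfl⟩
  have hprop : ∀ k : Fin (n/2), 0 < A k ∧ A k < Real.pi ∧
      (n:ℝ) * A k = (2*((k:ℕ):ℝ)+1) * Real.pi := by
    intro k
    have hk : 2*(k:ℕ)+1 < n := by have := k.isLt; omega
    have hkR : (2*((k:ℕ):ℝ)+1) < n := by exact_mod_cast hk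
    refine ⟨by rw [hA]; positivity, ?_, ?_⟩
    · rw [hA, div_lt_iff₀ hnR]
      nlinarith
    · rw [hA]; field_simp
  have hsetk : ∀ k, Set.range ![v k, w k] = {v k, w k} := by
    intro k
    simp only [Matrix.range_cons, Matrix.range_empty, Set.union_empty, Set.union_singleton]
    exact Set.pair_comm _ _
  have hmem : ∀ k x, (x ∈ Submodule.span ℝ (Set.range ![v k, w k])) ↔
      ∃ a b : ℝ, a • v k + b • w k = x := by
    intro k x
    rw [hsetk k, Submodule.mem_span_pair]
  -- rotation identities
  have hrot : ∀ k, ∀ i : Fin n,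
      cyclicDelta n i * v k (i-1) = Real.cos (A k) * v k i + Real.sin (A k) * w k i ∧
      cyclicDelta n i * w k (i-1) = -Real.sin (A k) * v k i + Real.cos (A k) * w k i := by
    intro k i
    obtain ⟨hA0, hAπ, hAn⟩ := hprop k
    have hcwrap : ∀ x:ℝ, Real.cos (x + (2*((k:ℕ):ℝ)+1)*Real.pi) = -Real.cos x := by
      intro x
      rw [show x + (2*((k:ℕ):ℝ)+1)*Real.pi = (x + Real.pi) + ((k:ℕ):ℤ)*(2*Real.pi) by
        push_cast; ring, Real.cos_add_int_mul_two_pi, Real.cos_add_pi]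
    have hswrap : ∀ x:ℝ, Real.sin (x + (2*((k:ℕ):ℝ)+1)*Real.pi) = -Real.sin x := by
      intro x
      rw [show x + (2*((k:ℕ):ℝ)+1)*Real.pi = (x + Real.pi) + ((k:ℕ):ℤ)*(2*Real.pi) by
        push_cast; ring, Real.sin_add_int_mul_two_pi, Real.sin_add_pi]
    by_cases h0 : i = 0
    · subst h0
      have hval : ((0:Fin n) - 1).val = n - 1 := fin_zero_sub_one_val n
      have hcast : ((n-1:ℕ):ℝ) = (n:ℝ) - 1 := by
        push_cast [Nat.cast_sub (by omega : 1 ≤ n)]; ring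
      have harg : ((n:ℝ)-1) * A k = -(A k) + (2*((k:ℕ):ℝ)+1)*Real.pi := by
        linear_combination hAn
      simp only [hv, hw, cyclicDelta, if_pos rfl, hval, Fin.val_zero]
      rw [hcast, harg, hcwrap, hswrap, Real.cos_neg, Real.sin_neg]
      norm_num
    · have hval : (i - 1).val = i.val - 1 := fin_sub_one_val_s9 n i h0
      have h1 : 1 ≤ i.val := Nat.pos_of_ne_zero (fun hh => h0 (Fin.ext hh))
      have hcast : ((i.val-1:ℕ):ℝ) = (i.val:ℝ) - 1 := by
        push_cast [Nat.cast_sub h1]; ring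
      simp only [hv, hw, cyclicDelta, if_neg h0, hval]
      rw [hcast, show ((i.val:ℝ) - 1) * A k = (i.val:ℝ) * A k - A k by ring,
        Real.cos_sub, Real.sin_sub]
      constructor <;> ring
  refine ⟨fun k => Submodule.span ℝ (Set.range ![v k, w k]), ?_, ?_, ?_⟩
  · -- finrank
    intro k
    obtain ⟨hA0, hAπ, hAn⟩ := hprop k
    have hli : LinearIndependent ℝ ![v k, w k] := by
      rw [LinearIndependent.pair_iff]
      intro s t hst
      have h0 := congrFun hst (⟨0, by omega⟩ : Fin n)
      have h1 := congrFun hst (⟨1, by omega⟩ : Fin n)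
      simp only [hv, hw, Pi.add_apply, Pi.smul_apply, smul_eq_mul, Pi.zero_apply] at h0 h1
      norm_num at h0 h1
      have hsin : Real.sin (A k) ≠ 0 := ne_of_gt (Real.sin_pos_of_pos_of_lt_pi hA0 hAπ)
      refine ⟨h0, ?_⟩
      rw [h0] at h1
      norm_num at h1
      rcases h1 with h1 | h1
      · exact h1
      · exact absurd h1 hsin
    rw [finrank_span_eq_card hli]
    simp
  · -- invariance
    intro k x hx
    rw [hmem] at hx ⊢
    obtain ⟨a, b, hab⟩ := hx
    refine ⟨a * Real.cos (A k) - b * Real.sin (A k), a * Real.sin (A k) + b * Real.cos (A k), ?_⟩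
    funext i
    rw [Pi.add_apply, Pi.smul_apply, Pi.smul_apply, smul_eq_mul, smul_eq_mul,
      amat_mulVec n x i, ← hab, Pi.add_apply, Pi.smul_apply, Pi.smul_apply,
      smul_eq_mul, smul_eq_mul]
    obtain ⟨hr1, hr2⟩ := hrot k i
    linear_combination (-a) * hr1 + (-b) * hr2
  · -- the Lyapunov value
    intro k ξ hξmem hne
    rw [hmem] at hξmem
    obtain ⟨a, b, hab⟩ := hξmem
    obtain ⟨hA0, hAπ, hAn⟩ := hprop k
    have hz : (⟨a, b⟩ : ℂ) ≠ 0 := by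
      intro hzero
      rw [Complex.ext_iff] at hzero
      obtain ⟨ha, hb⟩ := hzero
      simp only [Complex.zero_re, Complex.zero_im] at ha hb
      apply hne
      rw [← hab, ha, hb]
      simp
    have hr : 0 < ‖(⟨a, b⟩ : ℂ)‖ := norm_pos_iff.2 hz
    have hcos : Real.cos (Complex.arg ⟨a, b⟩) = a / ‖(⟨a, b⟩ : ℂ)‖ := Complex.cos_arg hz
    have hsin : Real.sin (Complex.arg ⟨a, b⟩) = b / ‖(⟨a, b⟩ : ℂ)‖ := Complex.sin_arg _
    have hξ : ∀ i : Fin n, ξ i =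
        ‖(⟨a, b⟩ : ℂ)‖ * Real.cos ((i.val:ℝ) * A k - Complex.arg ⟨a, b⟩) := by
      intro i
      rw [Real.cos_sub, hcos, hsin, ← hab]
      simp only [Pi.add_apply, Pi.smul_apply, smul_eq_mul, hv, hw]
      field_simp
    have hgood := good_of_cos n (k:ℕ) (A k) (Complex.arg ⟨a, b⟩) (‖(⟨a, b⟩ : ℂ)‖)
      hAn hA0 hAπ hr ξ hξ
    exact ⟨by show cyclicNm n ξ = cyclicNM n ξ; rw [hgood.1, hgood.2], hgood.1⟩
end
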